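/- arXiv:1610.05199 — 2 statements merged into one kernel-verified Lean document; each statement's English description precedes it below -/
import Mathlib

section
/- (Growth functional theorem.) Let (T,d) be a metric space and c, L > 0. Sets H₁,…,H_m ⊆ T are (b,c)-separated if there exist points x₁,…,x_m, y ∈ T with d(x_i,x_j) ≥ b for all i ≠ j, d(x_i,y) ≤ c·b for all i, and H_i ⊆ B(x_i, b/c) for all i, where B(x,s) := { z ∈ T : d(x,z) ≤ s }. Let (F_n)_{n≥0} be maps from subsets of T to [0,∞) that are increasing (H ⊆ H' implies F_n(H) ≤ F_n(H')) and decreasing in n (F_{n+1}(H) ≤ F_n(H)), and suppose they satisfy the growth condition: for every b > 0, n ≥ 1, and every collection H₁,…,H_N ⊆ T of N = 2^(2^n) sets that are (b,c)-separated, F_{n−1}(∪_{i≤N} H_i) ≥ L·2^{n/2}·b + min_{i≤N} F_n(H_i). Then there exist universal constants c₀ and C such that if c ≥ c₀, then γ₂(T) ≤ C·( (c/L)·F₀(T) + diam(T) ). -/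
open scoped ENNReal NNReal Classical
open EMetric Set

set_option linter.unusedSectionVars false
set_option linter.unusedVariables false
set_option maxHeartbeats 1000000

noncomputable section

universe u

/-- Diameter of a set with respect to an extended distance function `D`. -/
def eDiam {X : Type u} (D : X → X → ℝ≥0∞) (A : Set X) : ℝ≥0∞ :=
  ⨆ x ∈ A, ⨆ y ∈ A, D x y

/-- Entropy numbers: `entN D n A` is the infimum over sets `S` of cardinality
less than `2^(2^n)` of `sup_{x ∈ A} D(x, S)`. -/
def entN {X : Type u} (D : X → X → ℝ≥0∞) (n : ℕ) (A : Set X) : ℝ≥0∞ :=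
  ⨅ (S : Finset X) (_ : S.card < 2 ^ 2 ^ n), ⨆ x ∈ A, ⨅ y ∈ S, D x y

/-- An admissible sequence of a set `T`: an increasing (refining) sequence of
partitions of `T`, the `n`-th one having fewer than `2^(2^n)` pieces.
`piece n x` is the element of the `n`-th partition containing `x`. -/
structure Admissible {X : Type u} (T : Set X) where
  piece : ℕ → X → Set X
  self_mem : ∀ n, ∀ x ∈ T, x ∈ piece n x
  subset_base : ∀ n, ∀ x ∈ T, piece n x ⊆ T
  partition : ∀ n, ∀ x ∈ T, ∀ y ∈ T, y ∈ piece n x → piece n y = piece n x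
  finite_pieces : ∀ n, {A : Set X | ∃ x ∈ T, piece n x = A}.Finite
  card_pieces : ∀ n, {A : Set X | ∃ x ∈ T, piece n x = A}.ncard < 2 ^ 2 ^ n
  nested : ∀ n, ∀ x ∈ T, piece (n + 1) x ⊆ piece n x

/-- The chaining functional `γ_{α,p}(T)` with respect to the extended distance `D`. -/
def gammaF {X : Type u} (D : X → X → ℝ≥0∞) (α p : ℝ) (T : Set X) : ℝ≥0∞ :=
  ⨅ P : Admissible T,
    (⨆ x ∈ T, ∑' n : ℕ, ((2 : ℝ≥0∞) ^ ((n : ℝ) / α) * eDiam D (P.piece n x)) ^ p) ^ p⁻¹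

/-- Sets `H i` are `(b,c)`-separated: there are points `x i` that are `b`-separated,
all within distance `c·b` of a common point `y`, with `H i ⊆ B(x i, b/c)`. -/
def SeparatedFamily {T : Type u} [MetricSpace T] {N : ℕ} (b c : ℝ)
    (H : Fin N → Set T) : Prop :=
  ∃ (x : Fin N → T) (y : T),
    (∀ i j, i ≠ j → b ≤ dist (x i) (x j)) ∧
    (∀ i, dist (x i) y ≤ c * b) ∧
    (∀ i, H i ⊆ {z | dist (x i) z ≤ b / c})

namespace GFT

lemma sq2_gt_one : (1:ℝ) < Real.sqrt 2 := by
  nlinarith [Real.sq_sqrt (by norm_num : (0:ℝ) ≤ 2), Real.sqrt_nonneg 2]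

lemma sq2_pos : (0:ℝ) < Real.sqrt 2 := lt_trans one_pos sq2_gt_one

lemma sq2_le_32 : Real.sqrt 2 ≤ 3/2 := by
  nlinarith [Real.sq_sqrt (by norm_num : (0:ℝ) ≤ 2), Real.sqrt_nonneg 2]

lemma sq2_ge_43 : (4:ℝ)/3 ≤ Real.sqrt 2 := by
  nlinarith [Real.sq_sqrt (by norm_num : (0:ℝ) ≤ 2), Real.sqrt_nonneg 2]

lemma inv_sq2_le : (Real.sqrt 2)⁻¹ ≤ 3/4 := by
  have h1 : ((4:ℝ)/3)⁻¹ = 3/4 := by norm_num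
  calc (Real.sqrt 2)⁻¹ ≤ ((4:ℝ)/3)⁻¹ := by
        apply inv_anti₀ (by norm_num) sq2_ge_43
  _ = 3/4 := h1

lemma geom_le {q : ℝ} (h0 : 0 ≤ q) (h1 : q < 1) (n : ℕ) :
    ∑ j ∈ Finset.range n, q ^ j ≤ 1 / (1 - q) := by
  rw [geom_sum_eq h1.ne n]
  have h2 : (q ^ n - 1) / (q - 1) = (1 - q ^ n) / (1 - q) := by
    rw [div_eq_div_iff (by linarith) (by linarith)]
    ring
  rw [h2]
  have h3 : (0:ℝ) ≤ q ^ n := pow_nonneg h0 n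
  have h4 : (0:ℝ) < 1 - q := by linarith
  rw [div_le_div_iff₀ h4 h4]
  nlinarith [mul_nonneg h3 h4.le]

lemma sum_pow_half_le (s : Finset ℕ) : ∑ b ∈ s, ((1:ℝ)/2) ^ b ≤ 2 := by
  calc ∑ b ∈ s, ((1:ℝ)/2) ^ b ≤ ∑ b ∈ Finset.range ((s.sup id) + 1), ((1:ℝ)/2) ^ b := by
        apply Finset.sum_le_sum_of_subset_of_nonneg
        · exact s.subset_range_sup_succ
        · intro i _ _
          positivity
  _ ≤ 1 / (1 - 1/2) := geom_le (by norm_num) (by norm_num) _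
  _ = 2 := by norm_num

variable {T : Type u} [MetricSpace T]

/-- Context: all data of the problem. -/
structure Ctx (T : Type u) [MetricSpace T] : Type u where
  c : ℝ
  L : ℝ
  ε : ℝ
  R₀ : ℝ
  F : ℕ → Set T → ℝ

/-- Hypotheses on the context. -/
structure Good (Γ : Ctx T) : Prop where
  hc : 16 ≤ Γ.c
  hL : 0 < Γ.L
  hε : 0 < Γ.ε
  hR₀ : 0 < Γ.R₀
  hdist : ∀ x y : T, dist x y ≤ Γ.R₀
  hF0 : ∀ n H, 0 ≤ Γ.F n H
  hmono : ∀ (n : ℕ) (H H' : Set T), H ⊆ H' → Γ.F n H ≤ Γ.F n H'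
  hdec : ∀ (n : ℕ) (H : Set T), Γ.F (n + 1) H ≤ Γ.F n H
  growth : ∀ b : ℝ, 0 < b → ∀ n : ℕ, 1 ≤ n →
    ∀ H : Fin (2 ^ 2 ^ n) → Set T, SeparatedFamily b Γ.c H →
      Γ.L * (2 : ℝ) ^ ((n : ℝ) / 2) * b + ⨅ i, Γ.F n (H i) ≤
        Γ.F (n - 1) (⋃ i, H i)

namespace Ctx

variable (Γ : Ctx T)

/-- scale of level `k` -/
def s (k : ℕ) : ℝ := Γ.R₀ / (Γ.c / 2) ^ k

/-- separation radius at level `k` -/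
def bb (k : ℕ) : ℝ := Γ.s k / Γ.c

/-- potential-ball radius at level `k` -/
def hh (k : ℕ) : ℝ := Γ.s k / (Γ.c * Γ.c)

/-- greedy potential -/
def phi (n k : ℕ) (A : Set T) (y : T) : ℝ := Γ.F n (A ∩ Metric.closedBall y (Γ.hh k))

variable [Nonempty T]

/-- approximate maximizer of the potential on `R` -/
def pick (n k : ℕ) (A R : Set T) : T :=
  if h : ∃ y, y ∈ R ∧ ∀ z ∈ R, Γ.phi n k A z ≤ Γ.phi n k A y + Γ.ε / 2 ^ n then h.choose
  else Classical.arbitrary T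

/-- iterated remainders of the greedy splitting of `A` at stage `n`, level `k` -/
def rem (n k : ℕ) (A : Set T) : ℕ → Set T
  | 0 => A
  | l + 1 => rem n k A l \
      Metric.closedBall (Γ.pick n k A (rem n k A l)) (Γ.bb k)

/-- index of the chunk containing `x` -/
def lstar (n k : ℕ) (A : Set T) (x : T) : ℕ :=
  Nat.findGreatest (fun l => x ∈ Γ.rem n k A l) (2 ^ 2 ^ n - 1)

/-- one step of the partitioning: the piece of the splitting of `(A, k)` at stage `n`
containing `x`, together with its new level. -/
def stateStep (n : ℕ) (A : Set T) (k : ℕ) (x : T) : Set T × ℕ :=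
  if Γ.lstar n k A x = 2 ^ 2 ^ n - 1 then (Γ.rem n k A (2 ^ 2 ^ n - 1), k)
  else (Γ.rem n k A (Γ.lstar n k A x) ∩
      Metric.closedBall (Γ.pick n k A (Γ.rem n k A (Γ.lstar n k A x))) (Γ.bb k), k + 1)

/-- the piece containing `x` at stage `n`, with its level -/
def state (x : T) : ℕ → Set T × ℕ
  | 0 => (Set.univ, 0)
  | n + 1 => Γ.stateStep (n + 1) (state x n).1 (state x n).2 x

def pieceF (x : T) (n : ℕ) : Set T := (Γ.state x n).1

def lvl (x : T) (n : ℕ) : ℕ := (Γ.state x n).2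


section numeric
variable (hΓ : Good Γ)
include hΓ

lemma hcpos : 0 < Γ.c := lt_of_lt_of_le (by norm_num) hΓ.hc

lemma hrpos : 0 < Γ.c / 2 := by have := Γ.hcpos hΓ; linarith

lemma hr8 : 8 ≤ Γ.c / 2 := by have := hΓ.hc; linarith

lemma s_pos (k : ℕ) : 0 < Γ.s k := div_pos hΓ.hR₀ (pow_pos (Γ.hrpos hΓ) k)

lemma bb_pos (k : ℕ) : 0 < Γ.bb k := div_pos (Γ.s_pos hΓ k) (Γ.hcpos hΓ)

lemma hh_pos (k : ℕ) : 0 < Γ.hh k :=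
  div_pos (Γ.s_pos hΓ k) (mul_pos (Γ.hcpos hΓ) (Γ.hcpos hΓ))

lemma s_succ (k : ℕ) : Γ.s (k + 1) = 2 * Γ.bb k := by
  have hc := (Γ.hcpos hΓ).ne'
  simp only [Ctx.s, Ctx.bb, pow_succ]
  field_simp

lemma c_mul_bb (k : ℕ) : Γ.c * Γ.bb k = Γ.s k := by
  have hc := (Γ.hcpos hΓ).ne'
  rw [Ctx.bb]; field_simp

lemma hh_eq_bb_div (k : ℕ) : Γ.hh k = Γ.bb k / Γ.c := by
  rw [Ctx.hh, Ctx.bb, div_div]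

lemma bb_le_s (k : ℕ) : Γ.bb k ≤ Γ.s k := by
  have h1 := Γ.s_pos hΓ k
  have h2 := Γ.hcpos hΓ
  rw [Ctx.bb, div_le_iff₀ h2]
  nlinarith [hΓ.hc]

lemma hh_le_s (k : ℕ) : Γ.hh k ≤ Γ.s k := by
  have h1 := Γ.s_pos hΓ k
  have h2 := Γ.hcpos hΓ
  rw [Ctx.hh, div_le_iff₀ (by positivity)]
  have h3 : 1 ≤ Γ.c * Γ.c := by nlinarith [hΓ.hc]
  nlinarith [h3, h1]

lemma s_antitone {k k' : ℕ} (h : k ≤ k') : Γ.s k' ≤ Γ.s k := by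
  have hr := Γ.hrpos hΓ
  have h1 : (Γ.c / 2) ^ k ≤ (Γ.c / 2) ^ k' :=
    pow_le_pow_right₀ (by have := Γ.hr8 hΓ; linarith) h
  exact div_le_div_of_nonneg_left hΓ.hR₀.le (pow_pos hr k) h1

lemma s_add (k d : ℕ) : Γ.s (k + d) = Γ.s k / (Γ.c / 2) ^ d := by
  rw [Ctx.s, Ctx.s, pow_add, div_div]

lemma charge {k k' : ℕ} (h : k + 3 ≤ k') : 2 * Γ.s k' ≤ Γ.hh k := by
  have h1 : Γ.s k' ≤ Γ.s (k + 3) := Γ.s_antitone hΓ h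
  have h2 : 2 * Γ.s (k + 3) ≤ Γ.hh k := by
    rw [Γ.s_add hΓ k 3, Ctx.hh]
    have hS := Γ.s_pos hΓ k
    have hc := Γ.hcpos hΓ
    rw [mul_div_assoc', div_le_div_iff₀ (by positivity) (by positivity)]
    have hc16 := hΓ.hc
    nlinarith [mul_nonneg (mul_nonneg hS.le (mul_pos hc hc).le)
      (by linarith : (0:ℝ) ≤ Γ.c - 16)]
  linarith

end numeric


section structural

variable (hΓ : Good Γ)

/-- F is bounded by F 0 univ -/
lemma F_le_F (hΓ : Good Γ) {m n : ℕ} (h : m ≤ n) (A : Set T) : Γ.F n A ≤ Γ.F m A := by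
  induction n with
  | zero => simp_all
  | succ n ih =>
    rcases Nat.lt_or_ge m (n+1) with h'' | h''
    · exact le_trans (hΓ.hdec n A) (ih (by omega))
    · have : m = n + 1 := le_antisymm h h''
      simp [this]

lemma Fle (hΓ : Good Γ) (n : ℕ) (A : Set T) : Γ.F n A ≤ Γ.F 0 Set.univ :=
  le_trans (Γ.F_le_F hΓ (Nat.zero_le n) A) (hΓ.hmono 0 A Set.univ (Set.subset_univ A))

lemma rem_zero (n k : ℕ) (A : Set T) : Γ.rem n k A 0 = A := rfl

lemma rem_succ_subset (n k : ℕ) (A : Set T) (l : ℕ) :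
    Γ.rem n k A (l + 1) ⊆ Γ.rem n k A l := Set.diff_subset

lemma rem_antitone (n k : ℕ) (A : Set T) {l l' : ℕ} (h : l ≤ l') :
    Γ.rem n k A l' ⊆ Γ.rem n k A l := by
  induction l' with
  | zero => simp_all
  | succ l' ih =>
    rcases Nat.lt_or_ge l (l'+1) with h'' | h''
    · exact (Γ.rem_succ_subset n k A l').trans (ih (by omega))
    · have : l = l' + 1 := le_antisymm h h''
      simp [this]

lemma rem_subset (n k : ℕ) (A : Set T) (l : ℕ) : Γ.rem n k A l ⊆ A :=
  Γ.rem_antitone n k A (Nat.zero_le l)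

/-- the approximate maximizer exists -/
lemma pick_spec (hΓ : Good Γ) (n k : ℕ) (A : Set T) {R : Set T} (hR : R.Nonempty) :
    Γ.pick n k A R ∈ R ∧
      ∀ z ∈ R, Γ.phi n k A z ≤ Γ.phi n k A (Γ.pick n k A R) + Γ.ε / 2 ^ n := by
  have hε' : 0 < Γ.ε / 2 ^ n := div_pos hΓ.hε (by positivity)
  have hbdd : BddAbove (Γ.phi n k A '' R) := by
    refine ⟨Γ.F 0 Set.univ, ?_⟩
    rintro _ ⟨z, hz, rfl⟩
    exact Γ.Fle hΓ n _
  have hne : (Γ.phi n k A '' R).Nonempty := hR.image _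
  have hlt : sSup (Γ.phi n k A '' R) - Γ.ε / 2 ^ n < sSup (Γ.phi n k A '' R) := by linarith
  obtain ⟨_, ⟨y, hy, rfl⟩, hgt⟩ := exists_lt_of_lt_csSup hne hlt
  have hex : ∃ y, y ∈ R ∧ ∀ z ∈ R, Γ.phi n k A z ≤ Γ.phi n k A y + Γ.ε / 2 ^ n := by
    refine ⟨y, hy, fun z hz => ?_⟩
    have := le_csSup hbdd (Set.mem_image_of_mem _ hz)
    linarith
  rw [Ctx.pick, dif_pos hex]
  exact hex.choose_spec

lemma lstar_le (n k : ℕ) (A : Set T) (x : T) : Γ.lstar n k A x ≤ 2 ^ 2 ^ n - 1 :=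
  Nat.findGreatest_le _

lemma mem_rem_lstar (n k : ℕ) {A : Set T} {x : T} (hx : x ∈ A) :
    x ∈ Γ.rem n k A (Γ.lstar n k A x) := by
  rw [Ctx.lstar]
  exact Nat.findGreatest_spec (P := fun l => x ∈ Γ.rem n k A l) (Nat.zero_le _) hx

lemma le_lstar (n k : ℕ) {A : Set T} {x : T} {l : ℕ} (hl : l ≤ 2 ^ 2 ^ n - 1)
    (hx : x ∈ Γ.rem n k A l) : l ≤ Γ.lstar n k A x := by
  rw [Ctx.lstar]
  exact Nat.le_findGreatest (P := fun l => x ∈ Γ.rem n k A l) hl hx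

lemma notmem_rem_lstar_succ (n k : ℕ) (A : Set T) (x : T)
    (h : Γ.lstar n k A x < 2 ^ 2 ^ n - 1) :
    x ∉ Γ.rem n k A (Γ.lstar n k A x + 1) := by
  intro hmem
  have h2 : Γ.lstar n k A x + 1 ≤ 2 ^ 2 ^ n - 1 := by omega
  have := Γ.le_lstar n k h2 hmem
  omega

lemma stateStep_fst_subset (n : ℕ) (A : Set T) (k : ℕ) (x : T) :
    (Γ.stateStep n A k x).1 ⊆ A := by
  rw [Ctx.stateStep]
  split
  · exact Γ.rem_subset n k A _
  · exact (Set.inter_subset_left).trans (Γ.rem_subset n k A _)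

lemma stateStep_snd (n : ℕ) (A : Set T) (k : ℕ) (x : T) :
    (Γ.stateStep n A k x).2 = k ∨ (Γ.stateStep n A k x).2 = k + 1 := by
  rw [Ctx.stateStep]
  split
  · exact Or.inl rfl
  · exact Or.inr rfl

/-- case analysis for one step -/
lemma stateStep_cases (n : ℕ) (A : Set T) (k : ℕ) {x : T} (hx : x ∈ A) :
    (Γ.stateStep n A k x = (Γ.rem n k A (2 ^ 2 ^ n - 1), k) ∧
        x ∈ Γ.rem n k A (2 ^ 2 ^ n - 1)) ∨
    (∃ l < 2 ^ 2 ^ n - 1, Γ.stateStep n A k x =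
        (Γ.rem n k A l ∩ Metric.closedBall (Γ.pick n k A (Γ.rem n k A l)) (Γ.bb k), k + 1) ∧
        x ∈ Γ.rem n k A l ∩ Metric.closedBall (Γ.pick n k A (Γ.rem n k A l)) (Γ.bb k)) := by
  rcases eq_or_lt_of_le (Γ.lstar_le n k A x) with heq | hlt
  · left
    constructor
    · rw [Ctx.stateStep, if_pos heq]
    · have := Γ.mem_rem_lstar n k hx
      rwa [heq] at this
  · right
    refine ⟨Γ.lstar n k A x, hlt, ?_, ?_⟩
    · rw [Ctx.stateStep, if_neg (Nat.ne_of_lt hlt)]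
    · have h1 := Γ.mem_rem_lstar n k hx
      have h2 := Γ.notmem_rem_lstar_succ n k A x hlt
      refine ⟨h1, ?_⟩
      by_contra hball
      exact h2 ⟨h1, hball⟩

lemma mem_stateStep (n : ℕ) (A : Set T) (k : ℕ) {x : T} (hx : x ∈ A) :
    x ∈ (Γ.stateStep n A k x).1 := by
  rcases Γ.stateStep_cases n A k hx with ⟨heq, hmem⟩ | ⟨l, _, heq, hmem⟩ <;>
    rw [heq] <;> exact hmem

/-- same piece implies same step output -/
lemma stateStep_eq_of_mem (n : ℕ) (A : Set T) (k : ℕ) {x y : T} (hx : x ∈ A)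
    (hy : y ∈ (Γ.stateStep n A k x).1) : Γ.stateStep n A k y = Γ.stateStep n A k x := by
  have hyA : y ∈ A := Γ.stateStep_fst_subset n A k x hy
  rcases eq_or_lt_of_le (Γ.lstar_le n k A x) with heq | hlt
  · rw [Ctx.stateStep, if_pos heq] at hy
    have h1 : Γ.lstar n k A y = 2 ^ 2 ^ n - 1 :=
      le_antisymm (Γ.lstar_le n k A y) (Γ.le_lstar n k le_rfl hy)
    rw [Ctx.stateStep, Ctx.stateStep, if_pos heq, if_pos h1]
  · rw [Ctx.stateStep, if_neg (Nat.ne_of_lt hlt)] at hy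
    have h1 : Γ.lstar n k A x ≤ Γ.lstar n k A y :=
      Γ.le_lstar n k (le_of_lt hlt) hy.1
    have h2 : Γ.lstar n k A y ≤ Γ.lstar n k A x := by
      by_contra hgt
      push_neg at hgt
      have : y ∈ Γ.rem n k A (Γ.lstar n k A x + 1) :=
        Γ.rem_antitone n k A hgt (Γ.mem_rem_lstar n k hyA)
      exact this.2 hy.2
    have heq' : Γ.lstar n k A y = Γ.lstar n k A x := le_antisymm h2 h1
    rw [Ctx.stateStep, Ctx.stateStep, if_neg (Nat.ne_of_lt hlt), heq',
      if_neg (Nat.ne_of_lt hlt)]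

end structural


section stateLemmas

lemma state_zero (x : T) : Γ.state x 0 = (Set.univ, 0) := rfl

lemma state_succ (x : T) (n : ℕ) :
    Γ.state x (n + 1) = Γ.stateStep (n + 1) (Γ.state x n).1 (Γ.state x n).2 x := rfl

lemma piece_zero (x : T) : Γ.pieceF x 0 = Set.univ := rfl

lemma lvl_zero (x : T) : Γ.lvl x 0 = 0 := rfl

lemma mem_pieceF (x : T) (n : ℕ) : x ∈ Γ.pieceF x n := by
  induction n with
  | zero => exact Set.mem_univ x
  | succ n ih => exact Γ.mem_stateStep (n + 1) _ _ ih

lemma piece_succ_subset (x : T) (n : ℕ) : Γ.pieceF x (n + 1) ⊆ Γ.pieceF x n :=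
  Γ.stateStep_fst_subset (n + 1) _ _ x

lemma piece_antitone (x : T) {m n : ℕ} (h : m ≤ n) : Γ.pieceF x n ⊆ Γ.pieceF x m := by
  induction n with
  | zero => simp_all
  | succ n ih =>
    rcases Nat.lt_or_ge m (n + 1) with h'' | h''
    · exact (Γ.piece_succ_subset x n).trans (ih (by omega))
    · have : m = n + 1 := le_antisymm h h''
      simp [this]

lemma lvl_succ_cases (x : T) (n : ℕ) :
    Γ.lvl x (n + 1) = Γ.lvl x n ∨ Γ.lvl x (n + 1) = Γ.lvl x n + 1 :=
  Γ.stateStep_snd (n + 1) _ _ x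

lemma lvl_mono (x : T) {m n : ℕ} (h : m ≤ n) : Γ.lvl x m ≤ Γ.lvl x n := by
  induction n with
  | zero => simp_all
  | succ n ih =>
    rcases Nat.lt_or_ge m (n + 1) with h'' | h''
    · have h1 := ih (by omega)
      rcases Γ.lvl_succ_cases x n with h2 | h2 <;> omega
    · have : m = n + 1 := le_antisymm h h''
      simp [this]

lemma state_eq_of_mem (x : T) (n : ℕ) {y : T} (h : y ∈ Γ.pieceF x n) :
    Γ.state y n = Γ.state x n := by
  induction n with
  | zero => rfl
  | succ n ih =>
    have h1 : y ∈ Γ.pieceF x n := Γ.piece_succ_subset x n h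
    have h2 := ih h1
    rw [Γ.state_succ y n, h2, Γ.state_succ x n]
    exact Γ.stateStep_eq_of_mem (n + 1) _ _ (Γ.mem_pieceF x n) h

lemma diam_piece (hΓ : Good Γ) (x : T) (n : ℕ) :
    ∀ y ∈ Γ.pieceF x n, ∀ z ∈ Γ.pieceF x n, dist y z ≤ Γ.s (Γ.lvl x n) := by
  induction n with
  | zero =>
    intro y _ z _
    have : Γ.s 0 = Γ.R₀ := by simp [Ctx.s]
    rw [Γ.lvl_zero, this]
    exact hΓ.hdist y z
  | succ n ih =>
    rcases Γ.stateStep_cases (n + 1) (Γ.state x n).1 (Γ.state x n).2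
        (Γ.mem_pieceF x n) with ⟨heq, _⟩ | ⟨l, _, heq, _⟩
    · intro y hy z hz
      have hP : Γ.pieceF x (n+1) = Γ.rem (n+1) (Γ.lvl x n) (Γ.pieceF x n) (2 ^ 2 ^ (n+1) - 1) := by
        show (Γ.state x (n+1)).1 = _
        rw [Γ.state_succ x n, heq]
        rfl
      have hL : Γ.lvl x (n+1) = Γ.lvl x n := by
        show (Γ.state x (n+1)).2 = _
        rw [Γ.state_succ x n, heq]
        rfl
      rw [hL]
      rw [hP] at hy hz
      exact ih y (Γ.rem_subset _ _ _ _ hy) z (Γ.rem_subset _ _ _ _ hz)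
    · intro y hy z hz
      have hP : Γ.pieceF x (n+1) = Γ.rem (n+1) (Γ.lvl x n) (Γ.pieceF x n) l ∩
          Metric.closedBall (Γ.pick (n+1) (Γ.lvl x n) (Γ.pieceF x n)
            (Γ.rem (n+1) (Γ.lvl x n) (Γ.pieceF x n) l)) (Γ.bb (Γ.lvl x n)) := by
        show (Γ.state x (n+1)).1 = _
        rw [Γ.state_succ x n, heq]
        rfl
      have hL : Γ.lvl x (n+1) = Γ.lvl x n + 1 := by
        show (Γ.state x (n+1)).2 = _
        rw [Γ.state_succ x n, heq]
        rfl
      rw [hL, Γ.s_succ hΓ]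
      rw [hP] at hy hz
      have h1 : dist y _ ≤ Γ.bb (Γ.lvl x n) := Metric.mem_closedBall.mp hy.2
      have h2 : dist z _ ≤ Γ.bb (Γ.lvl x n) := Metric.mem_closedBall.mp hz.2
      calc dist y z ≤ dist y _ + dist z _ := dist_triangle_right y z _
        _ ≤ 2 * Γ.bb (Γ.lvl x n) := by linarith

end stateLemmas


lemma two_rpow_half (b : ℕ) : (2 : ℝ) ^ ((b : ℝ) / 2) = Real.sqrt 2 ^ b := by
  have h : Real.sqrt 2 = (2:ℝ) ^ ((2:ℝ)⁻¹) := by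
    rw [Real.sqrt_eq_rpow]
    norm_num
  rw [h, ← Real.rpow_natCast ((2:ℝ) ^ ((2:ℝ)⁻¹)) b,
    ← Real.rpow_mul (by norm_num : (0:ℝ) ≤ 2)]
  congr 1
  ring

/-- The key inequality at a stall step. -/
lemma key_stall (hΓ : Good Γ) (x : T) (n : ℕ)
    (hst : Γ.lvl x (n + 1) = Γ.lvl x n) :
    Γ.L * Real.sqrt 2 ^ (n + 1) * Γ.bb (Γ.lvl x n) +
      Γ.F (n + 1) (Γ.pieceF x n ∩ Metric.closedBall x (Γ.hh (Γ.lvl x n))) ≤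
    Γ.F n (Γ.pieceF x n ∩ Metric.closedBall x (2 * Γ.s (Γ.lvl x n))) + Γ.ε / 2 ^ (n + 1) := by
  set A := Γ.pieceF x n with hA
  set k := Γ.lvl x n with hk
  set N := 2 ^ 2 ^ (n + 1) with hN
  have hxA : x ∈ A := Γ.mem_pieceF x n
  have hN4 : 4 ≤ N := by
    rw [hN]
    calc (4:ℕ) = 2 ^ 2 := rfl
    _ ≤ 2 ^ 2 ^ (n+1) := Nat.pow_le_pow_right (by norm_num) (by
        calc (2:ℕ) = 2^1 := rfl
        _ ≤ 2^(n+1) := Nat.pow_le_pow_right (by norm_num) (by omega))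
  -- the step was a stall, so x lies in the last remainder
  have hxrem : x ∈ Γ.rem (n+1) k A (N - 1) := by
    rcases Γ.stateStep_cases (n+1) (Γ.state x n).1 (Γ.state x n).2 hxA with
      ⟨heq, hmem⟩ | ⟨l, _, heq, _⟩
    · exact hmem
    · exfalso
      have hcon : Γ.lvl x (n+1) = k + 1 := by
        show (Γ.state x (n+1)).2 = _
        rw [Γ.state_succ x n, heq]
        rfl
      omega
  have hremne : ∀ l, l ≤ N - 1 → (Γ.rem (n+1) k A l).Nonempty :=
    fun l hl => ⟨x, Γ.rem_antitone (n+1) k A hl hxrem⟩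
  -- the points
  set zq : ℕ → T := fun l =>
    if l < N - 1 then Γ.pick (n+1) k A (Γ.rem (n+1) k A l) else x with hzq
  have hzq_mem : ∀ l, l ≤ N - 1 → zq l ∈ Γ.rem (n+1) k A l := by
    intro l hl
    rw [hzq]
    dsimp only
    split
    · exact (Γ.pick_spec hΓ (n+1) k A (hremne l hl)).1
    · have hleq : l = N - 1 := by omega
      rw [hleq]
      exact hxrem
  have hzqA : ∀ l, l ≤ N - 1 → zq l ∈ A := fun l hl => Γ.rem_subset _ _ _ _ (hzq_mem l hl)
  have hzq_far : ∀ l l' : ℕ, l < l' → l' ≤ N - 1 →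
      Γ.bb k < dist (zq l') (zq l) := by
    intro l l' hll hl'
    have h1 : zq l' ∈ Γ.rem (n+1) k A (l + 1) :=
      Γ.rem_antitone (n+1) k A hll (hzq_mem l' hl')
    have h2 : zq l = Γ.pick (n+1) k A (Γ.rem (n+1) k A l) := by
      rw [hzq]
      dsimp only
      rw [if_pos (by omega)]
    have h3 : zq l' ∉ Metric.closedBall (Γ.pick (n+1) k A (Γ.rem (n+1) k A l)) (Γ.bb k) :=
      h1.2
    rw [← h2, Metric.mem_closedBall, not_le] at h3
    exact h3
  have hval : ∀ i : Fin N, (i : ℕ) ≤ N - 1 := fun i => by omega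
  -- the separated family
  set H : Fin N → Set T := fun i => A ∩ Metric.closedBall (zq i.val) (Γ.hh k) with hH
  have hsep : SeparatedFamily (Γ.bb k) Γ.c H := by
    refine ⟨fun i => zq i.val, zq 0, ?_, ?_, ?_⟩
    · intro i j hij
      rcases lt_trichotomy (i : ℕ) (j : ℕ) with hlt | heqv | hgt
      · have := hzq_far i.val j.val hlt (hval j)
        rw [dist_comm]
        linarith
      · exact absurd (Fin.ext heqv) hij
      · have := hzq_far j.val i.val hgt (hval i)
        linarith
    · intro i
      rw [Γ.c_mul_bb hΓ]
      exact Γ.diam_piece hΓ x n (zq i.val) (hzqA i.val (hval i)) (zq 0) (hzqA 0 (Nat.zero_le _))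
    · intro i z hz
      have hd : dist z (zq i.val) ≤ Γ.hh k := Metric.mem_closedBall.mp hz.2
      show dist (zq i.val) z ≤ Γ.bb k / Γ.c
      rw [dist_comm, ← Γ.hh_eq_bb_div hΓ]
      exact hd
  haveI : Nonempty (Fin N) := ⟨⟨0, by omega⟩⟩
  have hgrow := hΓ.growth (Γ.bb k) (Γ.bb_pos hΓ k) (n+1) (by omega) H hsep
  have hlow : Γ.F (n+1) (A ∩ Metric.closedBall x (Γ.hh k)) - Γ.ε / 2 ^ (n+1) ≤
      ⨅ i, Γ.F (n+1) (H i) := by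
    apply le_ciInf
    intro i
    rcases lt_or_ge (i : ℕ) (N - 1) with hi | hi
    · have hx_in : x ∈ Γ.rem (n+1) k A i.val :=
        Γ.rem_antitone (n+1) k A (by omega) hxrem
      have hspec := (Γ.pick_spec hΓ (n+1) k A (hremne i.val (hval i))).2 x hx_in
      have hzqi : zq i.val = Γ.pick (n+1) k A (Γ.rem (n+1) k A i.val) := by
        rw [hzq]
        dsimp only
        rw [if_pos hi]
      have hHi : H i = A ∩ Metric.closedBall
          (Γ.pick (n+1) k A (Γ.rem (n+1) k A i.val)) (Γ.hh k) := by
        rw [hH]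
        dsimp only
        rw [hzqi]
      rw [hHi]
      have hs1 : Γ.phi (n+1) k A x = Γ.F (n+1) (A ∩ Metric.closedBall x (Γ.hh k)) := rfl
      have hs2 : Γ.phi (n+1) k A (Γ.pick (n+1) k A (Γ.rem (n+1) k A i.val)) =
          Γ.F (n+1) (A ∩ Metric.closedBall
            (Γ.pick (n+1) k A (Γ.rem (n+1) k A i.val)) (Γ.hh k)) := rfl
      rw [hs1, hs2] at hspec
      linarith
    · have hieq : (i : ℕ) = N - 1 := by omega
      have hHi : H i = A ∩ Metric.closedBall x (Γ.hh k) := by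
        rw [hH]
        dsimp only
        rw [hieq, hzq]
        dsimp only
        rw [if_neg (lt_irrefl _)]
      rw [hHi]
      have hε' : 0 < Γ.ε / 2 ^ (n+1) := div_pos hΓ.hε (by positivity)
      linarith
  have hup : Γ.F n (⋃ i, H i) ≤ Γ.F n (A ∩ Metric.closedBall x (2 * Γ.s k)) := by
    apply hΓ.hmono
    rintro z hz
    rw [Set.mem_iUnion] at hz
    obtain ⟨i, hzA, hzball⟩ := hz
    refine ⟨hzA, ?_⟩
    rw [Metric.mem_closedBall] at hzball ⊢
    have h1 : dist (zq i.val) x ≤ Γ.s k :=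
      Γ.diam_piece hΓ x n (zq i.val) (hzqA i.val (hval i)) x hxA
    have h2 : Γ.hh k ≤ Γ.s k := Γ.hh_le_s hΓ k
    calc dist z x ≤ dist z (zq i.val) + dist (zq i.val) x := dist_triangle _ _ _
      _ ≤ 2 * Γ.s k := by linarith
  have hconv : (2:ℝ) ^ ((((n:ℕ)+1 : ℕ) : ℝ) / 2) = Real.sqrt 2 ^ (n+1) := two_rpow_half (n+1)
  have hstep : (n+1) - 1 = n := rfl
  rw [hstep] at hgrow
  rw [hconv] at hgrow
  linarith

section cardinality

/-- chunk as a function of the chunk index -/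
def stepChunk (n : ℕ) (A : Set T) (k : ℕ) (l : ℕ) : Set T × ℕ :=
  if l = 2 ^ 2 ^ n - 1 then (Γ.rem n k A (2 ^ 2 ^ n - 1), k)
  else (Γ.rem n k A l ∩
      Metric.closedBall (Γ.pick n k A (Γ.rem n k A l)) (Γ.bb k), k + 1)

lemma stateStep_eq_chunk (n : ℕ) (A : Set T) (k : ℕ) (x : T) :
    Γ.stateStep n A k x = Γ.stepChunk n A k (Γ.lstar n k A x) := rfl

/-- the set of values of `state · n` -/
def Svals (n : ℕ) : Set (Set T × ℕ) := {p | ∃ x : T, Γ.state x n = p}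

lemma Svals_finite_card (n : ℕ) :
    (Γ.Svals n).Finite ∧ (Γ.Svals n).ncard ≤ 2 ^ (2 ^ (n + 1) - 2) := by
  induction n with
  | zero =>
    have h : Γ.Svals 0 ⊆ {((Set.univ : Set T), 0)} := by
      rintro p ⟨x, rfl⟩
      rfl
    constructor
    · exact (Set.finite_singleton _).subset h
    · calc (Γ.Svals 0).ncard ≤ ({((Set.univ : Set T), 0)} : Set (Set T × ℕ)).ncard :=
          Set.ncard_le_ncard h (Set.finite_singleton _)
      _ = 1 := Set.ncard_singleton _
      _ ≤ 2 ^ (2 ^ 1 - 2) := by norm_num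
  | succ n ih =>
    obtain ⟨hfin, hcard⟩ := ih
    set M := 2 ^ 2 ^ (n + 1) - 1 with hM
    set G : Finset (Set T × ℕ) :=
      (hfin.toFinset ×ˢ Finset.Iic M).image
        (fun q : (Set T × ℕ) × ℕ => Γ.stepChunk (n + 1) q.1.1 q.1.2 q.2) with hG
    have hsub : Γ.Svals (n + 1) ⊆ ↑G := by
      rintro p ⟨x, rfl⟩
      rw [hG]
      simp only [Finset.coe_image, Set.mem_image]
      refine ⟨((Γ.state x n), Γ.lstar (n+1) (Γ.state x n).2 (Γ.state x n).1 x), ?_, ?_⟩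
      · simp only [Finset.mem_coe, Finset.mem_product, Finset.mem_Iic]
        exact ⟨hfin.mem_toFinset.mpr ⟨x, rfl⟩, Γ.lstar_le _ _ _ _⟩
      · rw [Γ.state_succ x n, Γ.stateStep_eq_chunk]
    constructor
    · exact G.finite_toSet.subset hsub
    · calc (Γ.Svals (n+1)).ncard ≤ (↑G : Set (Set T × ℕ)).ncard :=
          Set.ncard_le_ncard hsub G.finite_toSet
      _ = G.card := Set.ncard_coe_finset G
      _ ≤ (hfin.toFinset ×ˢ Finset.Iic M).card := Finset.card_image_le
      _ = hfin.toFinset.card * (M + 1) := by rw [Finset.card_product, Nat.card_Iic]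
      _ ≤ 2 ^ (2 ^ (n + 1) - 2) * 2 ^ 2 ^ (n + 1) := by
          apply Nat.mul_le_mul
          · rw [← Set.ncard_coe_finset, hfin.coe_toFinset]
            exact hcard
          · have h2 : (2:ℕ) ^ 2 ^ (n+1) ≥ 1 := Nat.one_le_two_pow
            omega
      _ = 2 ^ (2 ^ (n + 2) - 2) := by
          rw [← pow_add]
          congr 1
          have h2 : (2:ℕ) ^ (n+1) ≥ 2 := by
            calc (2:ℕ) = 2^1 := rfl
            _ ≤ 2^(n+1) := Nat.pow_le_pow_right (by norm_num) (by omega)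
          have h3 : (2:ℕ) ^ (n+2) = 2 * 2 ^ (n+1) := by ring
          omega

end cardinality


section chain

/-- the chain weight -/
def tt (x : T) (n : ℕ) : ℝ := Real.sqrt 2 ^ n * Γ.s (Γ.lvl x n)

/-- a stall step -/
def isStall (x : T) (n : ℕ) : Prop := 0 < n ∧ Γ.lvl x n = Γ.lvl x (n - 1)

/-- the last stall of a run -/
def isRL (x : T) (n : ℕ) : Prop := Γ.isStall x n ∧ ¬ Γ.isStall x (n + 1)

def Wq (x : T) (b : ℕ) : ℝ :=
  Γ.F (b - 1) (Γ.pieceF x (b - 1) ∩ Metric.closedBall x (2 * Γ.s (Γ.lvl x b)))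

def pq (x : T) (b : ℕ) : ℝ :=
  Γ.F b (Γ.pieceF x (b - 1) ∩ Metric.closedBall x (Γ.hh (Γ.lvl x b)))

lemma tt_pos (hΓ : Good Γ) (x : T) (n : ℕ) : 0 < Γ.tt x n :=
  mul_pos (pow_pos (Real.sqrt_pos.mpr (by norm_num)) n) (Γ.s_pos hΓ _)

lemma Wq_le (hΓ : Good Γ) (x : T) (b : ℕ) : Γ.Wq x b ≤ Γ.F 0 Set.univ := Γ.Fle hΓ _ _

lemma pq_nonneg (hΓ : Good Γ) (x : T) (b : ℕ) : 0 ≤ Γ.pq x b := hΓ.hF0 _ _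

lemma pq_le (hΓ : Good Γ) (x : T) (b : ℕ) : Γ.pq x b ≤ Γ.F 0 Set.univ := Γ.Fle hΓ _ _

/-- the stall inequality in chain form -/
lemma stall_ineq (hΓ : Good Γ) (x : T) {b : ℕ} (hb : Γ.isStall x b) :
    Γ.L * Γ.tt x b / Γ.c ≤ Γ.Wq x b - Γ.pq x b + Γ.ε / 2 ^ b := by
  obtain ⟨hb0, hbl⟩ := hb
  obtain ⟨n, rfl⟩ : ∃ n, b = n + 1 := ⟨b - 1, by omega⟩
  have hst : Γ.lvl x (n + 1) = Γ.lvl x n := by simpa using hbl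
  have hkey := Γ.key_stall hΓ x n hst
  have hWq : Γ.Wq x (n + 1) =
      Γ.F n (Γ.pieceF x n ∩ Metric.closedBall x (2 * Γ.s (Γ.lvl x n))) := by
    rw [Ctx.Wq]
    simp only [Nat.add_sub_cancel, hst]
  have hpq : Γ.pq x (n + 1) =
      Γ.F (n + 1) (Γ.pieceF x n ∩ Metric.closedBall x (Γ.hh (Γ.lvl x n))) := by
    rw [Ctx.pq]
    simp only [Nat.add_sub_cancel, hst]
  have htt : Γ.L * Γ.tt x (n + 1) / Γ.c =
      Γ.L * Real.sqrt 2 ^ (n + 1) * Γ.bb (Γ.lvl x n) := by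
    rw [Ctx.tt, Ctx.bb, hst]
    field_simp
  rw [hWq, hpq, htt]
  linarith

/-- charging across levels -/
lemma charge_ineq (hΓ : Good Γ) (x : T) {b b' : ℕ} (hbb : b ≤ b' - 1) (hb' : 1 ≤ b')
    (hkk : Γ.lvl x b + 3 ≤ Γ.lvl x b') : Γ.Wq x b' ≤ Γ.pq x b := by
  have h1 : Γ.pieceF x (b' - 1) ⊆ Γ.pieceF x (b - 1) :=
    Γ.piece_antitone x (by omega)
  have h2 : Metric.closedBall x (2 * Γ.s (Γ.lvl x b')) ⊆
      Metric.closedBall x (Γ.hh (Γ.lvl x b)) :=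
    Metric.closedBall_subset_closedBall (Γ.charge hΓ hkk)
  have h3 : Γ.Wq x b' ≤ Γ.F (b' - 1)
      (Γ.pieceF x (b - 1) ∩ Metric.closedBall x (Γ.hh (Γ.lvl x b))) :=
    hΓ.hmono _ _ _ (Set.inter_subset_inter h1 h2)
  exact h3.trans (Γ.F_le_F hΓ hbb _)

/-- levels strictly increase along run-lasts -/
lemma RL_lvl_lt (x : T) {b b' : ℕ} (hb : Γ.isRL x b) (hb' : Γ.isRL x b')
    (h : b < b') : Γ.lvl x b < Γ.lvl x b' := by
  have h1 : Γ.lvl x (b + 1) = Γ.lvl x b + 1 := by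
    rcases Γ.lvl_succ_cases x b with h2 | h2
    · exfalso
      exact hb.2 ⟨by omega, by simpa using h2⟩
    · exact h2
  have h2 : Γ.lvl x (b + 1) ≤ Γ.lvl x b' := Γ.lvl_mono x (by omega)
  omega

/-- every stall has a run-last -/
lemma run_exists (hΓ : Good Γ) (x : T) {b : ℕ} (hb : Γ.isStall x b) :
    ∃ j, Γ.isRL x (b + j) ∧ ∀ j' ≤ j, Γ.isStall x (b + j') := by
  have hterm : ∃ j, ¬ Γ.isStall x (b + j + 1) := by
    by_contra hcon
    push_neg at hcon
    have hallstall : ∀ j, Γ.isStall x (b + j) := by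
      intro j
      cases j with
      | zero => exact hb
      | succ j => exact hcon j
    have hconst : ∀ j, Γ.lvl x (b + j) = Γ.lvl x b := by
      intro j
      induction j with
      | zero => rfl
      | succ j ih =>
        have h9 := (hallstall (j+1)).2
        simp only [show b + (j+1) - 1 = b + j by omega] at h9
        exact h9.trans ih
    have hbound : ∀ j : ℕ, Γ.L * (Real.sqrt 2 ^ j * Γ.s (Γ.lvl x b)) / Γ.c ≤
        Γ.F 0 Set.univ + Γ.ε := by
      intro j
      have h1 := Γ.stall_ineq hΓ x (hallstall j)
      have h2 : Γ.ε / 2 ^ (b + j) ≤ Γ.ε :=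
        div_le_self hΓ.hε.le (one_le_pow₀ (by norm_num : (1:ℝ) ≤ 2))
      have h3 := Γ.Wq_le hΓ x (b + j)
      have h4 := Γ.pq_nonneg hΓ x (b + j)
      have h5 : Γ.tt x (b + j) = Real.sqrt 2 ^ (b + j) * Γ.s (Γ.lvl x b) := by
        rw [Ctx.tt, hconst j]
      have h6 : Real.sqrt 2 ^ j ≤ Real.sqrt 2 ^ (b + j) := by
        apply pow_le_pow_right₀
        · nlinarith [Real.sq_sqrt (by norm_num : (0:ℝ) ≤ 2), Real.sqrt_nonneg 2]
        · omega
      have h7 : Γ.L * (Real.sqrt 2 ^ j * Γ.s (Γ.lvl x b)) / Γ.c ≤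
          Γ.L * Γ.tt x (b + j) / Γ.c := by
        rw [h5]
        gcongr <;> first
          | exact hΓ.hL.le
          | exact (Γ.s_pos hΓ _).le
          | exact (Γ.hcpos hΓ).le
          | exact h6
      linarith
    obtain ⟨j, hj⟩ := pow_unbounded_of_one_lt
      ((Γ.F 0 Set.univ + Γ.ε) * Γ.c / (Γ.L * Γ.s (Γ.lvl x b)))
      (by nlinarith [Real.sq_sqrt (by norm_num : (0:ℝ) ≤ 2), Real.sqrt_nonneg 2] :
        (1:ℝ) < Real.sqrt 2)
    have hLs : 0 < Γ.L * Γ.s (Γ.lvl x b) := mul_pos hΓ.hL (Γ.s_pos hΓ _)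
    have hc := Γ.hcpos hΓ
    have h8 := hbound j
    rw [div_le_iff₀ hc] at h8
    rw [div_lt_iff₀ hLs] at hj
    nlinarith [hΓ.hε, hΓ.hF0 0 (Set.univ : Set T), hj, h8]
  set j₀ := Nat.find hterm with hj₀
  have hspec : ¬ Γ.isStall x (b + j₀ + 1) := Nat.find_spec hterm
  have hrun : ∀ j' ≤ j₀, Γ.isStall x (b + j') := by
    intro j' hj'
    cases j' with
    | zero => exact hb
    | succ j' =>
      have h10 := Nat.find_min hterm (show j' < j₀ by omega)
      rw [not_not] at h10
      exact h10
  exact ⟨j₀, ⟨hrun j₀ le_rfl, hspec⟩, hrun⟩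


/-- the end of the run containing a stall -/
def rl (x : T) (a : ℕ) : ℕ :=
  if h : ∃ j, Γ.isRL x (a + j) ∧ ∀ j' ≤ j, Γ.isStall x (a + j') then a + h.choose else a

lemma rl_spec (hΓ : Good Γ) (x : T) {a : ℕ} (ha : Γ.isStall x a) :
    Γ.isRL x (Γ.rl x a) ∧ a ≤ Γ.rl x a ∧
      Γ.tt x a ≤ Γ.tt x (Γ.rl x a) * (Real.sqrt 2)⁻¹ ^ (Γ.rl x a - a) := by
  have h := Γ.run_exists hΓ x ha
  rw [Ctx.rl, dif_pos h]
  obtain ⟨hRL, hrun⟩ := h.choose_spec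
  set j := h.choose with hj
  refine ⟨hRL, by omega, ?_⟩
  have hscale : ∀ jj, jj ≤ j → Γ.tt x (a + jj) = Real.sqrt 2 ^ jj * Γ.tt x a := by
    intro jj hjj
    induction jj with
    | zero => simp
    | succ jj ih =>
      have h1 : Γ.isStall x (a + (jj + 1)) := hrun (jj + 1) hjj
      have h2 : Γ.lvl x (a + (jj + 1)) = Γ.lvl x (a + jj) := by
        have := h1.2
        simpa [show a + (jj + 1) - 1 = a + jj by omega] using this
      have h3 : Γ.tt x (a + (jj + 1)) = Real.sqrt 2 * Γ.tt x (a + jj) := by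
        rw [Ctx.tt, Ctx.tt, h2, show a + (jj + 1) = (a + jj) + 1 by omega, pow_succ]
        ring
      rw [h3, ih (by omega), pow_succ]
      ring
  have h4 := hscale j le_rfl
  have h5 : Γ.tt x a = Γ.tt x (a + j) * (Real.sqrt 2)⁻¹ ^ j := by
    rw [h4, inv_pow]
    field_simp
  rw [h5, show a + j - a = j by omega]

/-- the mod-3 telescoping bound for sums over run-lasts -/
lemma RL_sum (hΓ : Good Γ) (x : T) (G : Finset ℕ) (hG : ∀ b ∈ G, Γ.isRL x b) :
    ∑ b ∈ G, Γ.tt x b ≤ Γ.c / Γ.L * (3 * Γ.F 0 Set.univ + 2 * Γ.ε) := by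
  classical
  set F0 := Γ.F 0 Set.univ with hF0
  set Gc := G.card with hGc
  set e := G.orderIsoOfFin rfl with he
  set ns : ℕ → ℕ := fun i => if h : i < Gc then (e ⟨i, h⟩ : ℕ) else 0 with hns
  have hmem : ∀ i, i < Gc → ns i ∈ G := by
    intro i hi
    rw [hns]
    dsimp only
    rw [dif_pos hi]
    exact (e ⟨i, hi⟩).2
  have hstrict : ∀ i j, i < j → j < Gc → ns i < ns j := by
    intro i j hij hj
    rw [hns]
    dsimp only
    rw [dif_pos hj, dif_pos (by omega)]
    have : (⟨i, by omega⟩ : Fin Gc) < ⟨j, hj⟩ := by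
      rw [Fin.mk_lt_mk]
      exact hij
    have h2 := (OrderIso.lt_iff_lt e).mpr this
    exact h2
  have hRLns : ∀ i, i < Gc → Γ.isRL x (ns i) := fun i hi => hG _ (hmem i hi)
  have hpos : ∀ i, i < Gc → 1 ≤ ns i := fun i hi => (hRLns i hi).1.1
  have hinj : Set.InjOn ns (Finset.range Gc) := by
    intro i hi j hj hij
    simp only [Finset.coe_range, Set.mem_Iio] at hi hj
    by_contra hne
    rcases lt_or_gt_of_ne hne with h | h
    · exact absurd hij (hstrict i j h hj).ne
    · exact absurd hij.symm (hstrict j i h hi).ne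
  -- the key pointwise bound
  have hkey : ∀ i ∈ Finset.range Gc,
      Γ.L * Γ.tt x (ns i) / Γ.c + Γ.pq x (ns i) ≤
        (if 3 ≤ i then Γ.pq x (ns (i - 3)) else F0) + Γ.ε / 2 ^ (ns i) := by
    intro i hi
    rw [Finset.mem_range] at hi
    have h1 := Γ.stall_ineq hΓ x (hRLns i hi).1
    by_cases h3i : 3 ≤ i
    · rw [if_pos h3i]
      have hlt1 : Γ.lvl x (ns (i-3)) < Γ.lvl x (ns (i-2)) :=
        Γ.RL_lvl_lt x (hRLns _ (by omega)) (hRLns _ (by omega)) (hstrict _ _ (by omega) (by omega))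
      have hlt2 : Γ.lvl x (ns (i-2)) < Γ.lvl x (ns (i-1)) :=
        Γ.RL_lvl_lt x (hRLns _ (by omega)) (hRLns _ (by omega)) (hstrict _ _ (by omega) (by omega))
      have hlt3 : Γ.lvl x (ns (i-1)) < Γ.lvl x (ns i) :=
        Γ.RL_lvl_lt x (hRLns _ (by omega)) (hRLns _ (by omega)) (hstrict _ _ (by omega) hi)
      have hchg := Γ.charge_ineq hΓ x (b := ns (i-3)) (b' := ns i)
        (by have := hstrict (i-3) i (by omega) hi; omega)
        (hpos i hi) (by omega)
      linarith
    · rw [if_neg h3i]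
      have h2 := Γ.Wq_le hΓ x (ns i)
      linarith
  -- sum it up
  have hsum1 : ∑ i ∈ Finset.range Gc, (Γ.L * Γ.tt x (ns i) / Γ.c + Γ.pq x (ns i)) ≤
      ∑ i ∈ Finset.range Gc, ((if 3 ≤ i then Γ.pq x (ns (i - 3)) else F0) + Γ.ε / 2 ^ (ns i)) :=
    Finset.sum_le_sum hkey
  have hsplit1 : ∑ i ∈ Finset.range Gc, (Γ.L * Γ.tt x (ns i) / Γ.c + Γ.pq x (ns i)) =
      ∑ i ∈ Finset.range Gc, Γ.L * Γ.tt x (ns i) / Γ.c +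
        ∑ i ∈ Finset.range Gc, Γ.pq x (ns i) := Finset.sum_add_distrib
  have hsplit2 : ∑ i ∈ Finset.range Gc,
      ((if 3 ≤ i then Γ.pq x (ns (i - 3)) else F0) + Γ.ε / 2 ^ (ns i)) =
      ∑ i ∈ Finset.range Gc, (if 3 ≤ i then Γ.pq x (ns (i - 3)) else F0) +
        ∑ i ∈ Finset.range Gc, Γ.ε / 2 ^ (ns i) := Finset.sum_add_distrib
  -- the if-sum
  have hif : ∑ i ∈ Finset.range Gc, (if 3 ≤ i then Γ.pq x (ns (i - 3)) else F0) ≤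
      3 * F0 + ∑ i ∈ Finset.range Gc, Γ.pq x (ns i) := by
    rw [Finset.sum_ite]
    have hfil1 : (Finset.range Gc).filter (fun i => 3 ≤ i) = Finset.Ico 3 Gc := by
      ext i
      simp only [Finset.mem_filter, Finset.mem_range, Finset.mem_Ico]
      omega
    have hfil2 : ((Finset.range Gc).filter (fun i => ¬ 3 ≤ i)).card ≤ 3 := by
      have hsub : (Finset.range Gc).filter (fun i => ¬ 3 ≤ i) ⊆ Finset.range 3 := by
        intro i hi
        simp only [Finset.mem_filter, Finset.mem_range] at hi ⊢
        omega
      calc _ ≤ (Finset.range 3).card := Finset.card_le_card hsub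
      _ = 3 := Finset.card_range 3
    have h5 : ∑ i ∈ (Finset.range Gc).filter (fun i => ¬ 3 ≤ i), F0 ≤ 3 * F0 := by
      rw [Finset.sum_const, nsmul_eq_mul]
      have hF0nn : 0 ≤ F0 := hΓ.hF0 0 _
      have hcast : (((Finset.range Gc).filter (fun i => ¬ 3 ≤ i)).card : ℝ) ≤ 3 := by
        exact_mod_cast hfil2
      nlinarith [mul_le_mul_of_nonneg_right hcast hF0nn]
    have h6 : ∑ i ∈ (Finset.range Gc).filter (fun i => 3 ≤ i), Γ.pq x (ns (i - 3)) ≤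
        ∑ i ∈ Finset.range Gc, Γ.pq x (ns i) := by
      rw [hfil1, Finset.sum_Ico_eq_sum_range]
      simp only [show ∀ i, 3 + i - 3 = i from fun i => by omega]
      apply Finset.sum_le_sum_of_subset_of_nonneg
      · intro i hi
        simp only [Finset.mem_range] at hi ⊢
        omega
      · intro i _ _
        exact Γ.pq_nonneg hΓ x _
    linarith
  -- the epsilon sum
  have hε : ∑ i ∈ Finset.range Gc, Γ.ε / 2 ^ (ns i) ≤ 2 * Γ.ε := by
    have h7 : ∀ b : ℕ, Γ.ε / 2 ^ b = Γ.ε * (1/2) ^ b := by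
      intro b
      rw [div_pow, one_pow]
      ring
    have h8 : ∑ i ∈ Finset.range Gc, Γ.ε / 2 ^ (ns i) =
        Γ.ε * ∑ i ∈ Finset.range Gc, ((1:ℝ)/2) ^ (ns i) := by
      rw [Finset.mul_sum]
      exact Finset.sum_congr rfl fun i _ => h7 (ns i)
    have h9 : ∑ i ∈ Finset.range Gc, ((1:ℝ)/2) ^ (ns i) =
        ∑ b ∈ (Finset.range Gc).image ns, ((1:ℝ)/2) ^ b := (Finset.sum_image (by
          intro i hi j hj hij
          exact hinj (by simpa using hi) (by simpa using hj) hij)).symm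
    rw [h8, h9]
    have h10 := sum_pow_half_le ((Finset.range Gc).image ns)
    nlinarith [hΓ.hε]
  -- conversion between tt-sum and d-sum
  have himg : (Finset.range Gc).image ns = G := by
    apply Finset.eq_of_subset_of_card_le
    · intro b hb
      rw [Finset.mem_image] at hb
      obtain ⟨i, hi, rfl⟩ := hb
      rw [Finset.mem_range] at hi
      exact hmem i hi
    · have hq : ((Finset.range Gc).image ns).card = G.card := by
        rw [Finset.card_image_of_injOn hinj, Finset.card_range]
      omega
  have hsum_tt : ∑ b ∈ G, Γ.tt x b = ∑ i ∈ Finset.range Gc, Γ.tt x (ns i) := by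
    rw [← himg]
    exact Finset.sum_image fun i hi j hj hij =>
      hinj (by simpa using hi) (by simpa using hj) hij
  have hL := hΓ.hL
  have hc := Γ.hcpos hΓ
  have hdsum : ∑ i ∈ Finset.range Gc, Γ.L * Γ.tt x (ns i) / Γ.c ≤ 3 * F0 + 2 * Γ.ε := by
    rw [hsplit1] at hsum1
    rw [hsplit2] at hsum1
    linarith
  have hconv : ∑ i ∈ Finset.range Gc, Γ.tt x (ns i) =
      Γ.c / Γ.L * ∑ i ∈ Finset.range Gc, Γ.L * Γ.tt x (ns i) / Γ.c := by
    rw [Finset.mul_sum]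
    apply Finset.sum_congr rfl
    intro i _
    field_simp
  rw [hsum_tt, hconv]
  have hcL : 0 ≤ Γ.c / Γ.L := by positivity
  calc Γ.c / Γ.L * ∑ i ∈ Finset.range Gc, Γ.L * Γ.tt x (ns i) / Γ.c ≤
      Γ.c / Γ.L * (3 * F0 + 2 * Γ.ε) := by
        apply mul_le_mul_of_nonneg_left hdsum hcL
  _ = Γ.c / Γ.L * (3 * Γ.F 0 Set.univ + 2 * Γ.ε) := rfl


lemma tt_zero (hΓ : Good Γ) (x : T) : Γ.tt x 0 = Γ.R₀ := by
  rw [Ctx.tt, Γ.lvl_zero, Ctx.s]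
  simp

/-- geometric decay between stalls -/
lemma decay (hΓ : Good Γ) (x : T) :
    ∀ d a, (∀ m, a < m → m ≤ a + d → ¬ Γ.isStall x m) →
      Γ.tt x (a + d) ≤ Γ.tt x a * (1/4) ^ d := by
  intro d
  induction d with
  | zero => intro a _; simp
  | succ d ih =>
    intro a hno
    have h1 : ¬ Γ.isStall x (a + d + 1) := hno (a + d + 1) (by omega) (by omega)
    have h2 : Γ.lvl x (a + d + 1) = Γ.lvl x (a + d) + 1 := by
      rcases Γ.lvl_succ_cases x (a + d) with h | h
      · exfalso
        exact h1 ⟨by omega, by simpa [show a + d + 1 - 1 = a + d by omega] using h⟩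
      · exact h
    have h3 : Γ.tt x (a + d + 1) = (2 * Real.sqrt 2 / Γ.c) * Γ.tt x (a + d) := by
      rw [Ctx.tt, Ctx.tt, h2, Γ.s_succ hΓ, Ctx.bb, pow_succ]
      have hc := (Γ.hcpos hΓ).ne'
      field_simp
    have h4 : 2 * Real.sqrt 2 / Γ.c ≤ 1/4 := by
      have := sq2_le_32
      have hc16 := hΓ.hc
      rw [div_le_iff₀ (Γ.hcpos hΓ)]
      nlinarith
    have h5 := ih a (fun m hm1 hm2 => hno m hm1 (by omega))
    have h6 := Γ.tt_pos hΓ x (a + d)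
    have h7 : (0:ℝ) ≤ Γ.tt x a * (1/4) ^ d := le_trans h6.le (by linarith)
    calc Γ.tt x (a + (d+1)) = Γ.tt x (a + d + 1) := by rw [show a + (d+1) = a + d + 1 by omega]
    _ = (2 * Real.sqrt 2 / Γ.c) * Γ.tt x (a + d) := h3
    _ ≤ (1/4) * Γ.tt x (a + d) := by nlinarith [h6, h4, sq2_pos, Γ.hcpos hΓ]
    _ ≤ (1/4) * (Γ.tt x a * (1/4) ^ d) := by linarith
    _ = Γ.tt x a * (1/4) ^ (d+1) := by ring

/-- sum over stalls is controlled by run-lasts -/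
lemma stall_sum (hΓ : Good Γ) (x : T) (N : ℕ) :
    ∑ a ∈ (Finset.range N).filter (Γ.isStall x), Γ.tt x a ≤
      4 * (Γ.c / Γ.L * (3 * Γ.F 0 Set.univ + 2 * Γ.ε)) := by
  classical
  set U := Γ.c / Γ.L * (3 * Γ.F 0 Set.univ + 2 * Γ.ε) with hU
  have hUnn : 0 ≤ U := by
    have h1 := hΓ.hF0 0 (Set.univ : Set T)
    have h2 := hΓ.hε
    have h3 := hΓ.hL
    have h4 := Γ.hcpos hΓ
    positivity
  set S := (Finset.range N).filter (Γ.isStall x) with hS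
  have hSstall : ∀ a ∈ S, Γ.isStall x a := fun a ha => (Finset.mem_filter.mp ha).2
  set M := ((Finset.range N).sup (Γ.rl x)) + 1 with hM
  set e2 : ℕ → ℕ × ℕ := fun n => (Γ.rl x n, Γ.rl x n - n) with he2
  set g2 : ℕ × ℕ → ℝ := fun p => Γ.tt x p.1 * ((3:ℝ)/4) ^ p.2 with hg2
  have hterm : ∀ a ∈ S, Γ.tt x a ≤ g2 (e2 a) := by
    intro a ha
    obtain ⟨hRL, hle, hbound⟩ := Γ.rl_spec hΓ x (hSstall a ha)
    refine hbound.trans ?_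
    rw [hg2, he2]
    dsimp only
    apply mul_le_mul_of_nonneg_left ?_ (Γ.tt_pos hΓ x _).le
    apply pow_le_pow_left₀ (by positivity) inv_sq2_le
  have hinj2 : Set.InjOn e2 ↑S := by
    intro a ha b hb hab
    have h1 := (Γ.rl_spec hΓ x (hSstall a ha)).2.1
    have h2 := (Γ.rl_spec hΓ x (hSstall b hb)).2.1
    rw [he2] at hab
    simp only [Prod.mk.injEq] at hab
    omega
  have hmapsto : ∀ a ∈ S, e2 a ∈ ((Finset.range M).filter (Γ.isRL x)) ×ˢ (Finset.range M) := by
    intro a ha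
    have h1 := (Γ.rl_spec hΓ x (hSstall a ha)).1
    have h2 : Γ.rl x a ≤ (Finset.range N).sup (Γ.rl x) :=
      Finset.le_sup (Finset.mem_filter.mp ha).1
    rw [he2]
    dsimp only
    rw [Finset.mem_product, Finset.mem_filter, Finset.mem_range, Finset.mem_range]
    exact ⟨⟨by omega, h1⟩, by omega⟩
  calc ∑ a ∈ S, Γ.tt x a ≤ ∑ a ∈ S, g2 (e2 a) := Finset.sum_le_sum hterm
  _ = ∑ p ∈ S.image e2, g2 p := (Finset.sum_image fun a ha b hb hab =>
      hinj2 ha hb hab).symm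
  _ ≤ ∑ p ∈ ((Finset.range M).filter (Γ.isRL x)) ×ˢ (Finset.range M), g2 p := by
      apply Finset.sum_le_sum_of_subset_of_nonneg
      · intro p hp
        rw [Finset.mem_image] at hp
        obtain ⟨a, ha, rfl⟩ := hp
        exact hmapsto a ha
      · intro p _ _
        rw [hg2]
        have := Γ.tt_pos hΓ x p.1
        positivity
  _ = (∑ b ∈ (Finset.range M).filter (Γ.isRL x), Γ.tt x b) *
        (∑ j ∈ Finset.range M, ((3:ℝ)/4) ^ j) := by
      rw [Finset.sum_product, Finset.sum_mul]
      apply Finset.sum_congr rfl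
      intro b _
      simp only [hg2, Finset.mul_sum]
  _ ≤ U * 4 := by
      apply mul_le_mul
      · exact Γ.RL_sum hΓ x _ (fun b hb => (Finset.mem_filter.mp hb).2)
      · calc ∑ j ∈ Finset.range M, ((3:ℝ)/4) ^ j ≤ 1 / (1 - 3/4) :=
            geom_le (by norm_num) (by norm_num) M
        _ = 4 := by norm_num
      · apply Finset.sum_nonneg
        intro j _
        positivity
      · exact hUnn
  _ = 4 * U := by ring

/-- the master bound on partial sums of the chain weights -/
lemma sum_tt_le (hΓ : Good Γ) (x : T) (N : ℕ) :
    ∑ n ∈ Finset.range N, Γ.tt x n ≤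
      2 * Γ.R₀ + 6 * (Γ.c / Γ.L * (3 * Γ.F 0 Set.univ + 2 * Γ.ε)) := by
  classical
  set U := Γ.c / Γ.L * (3 * Γ.F 0 Set.univ + 2 * Γ.ε) with hU
  have hUnn : 0 ≤ U := by
    have h1 := hΓ.hF0 0 (Set.univ : Set T)
    have h2 := hΓ.hε
    have h3 := hΓ.hL
    have h4 := Γ.hcpos hΓ
    positivity
  have hR := hΓ.hR₀
  set ls : ℕ → ℕ := fun n => Nat.findGreatest (Γ.isStall x) n with hls
  have hls_le : ∀ n, ls n ≤ n := fun n => Nat.findGreatest_le n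
  have hls_no : ∀ n m, ls n < m → m ≤ n → ¬ Γ.isStall x m := by
    intro n m h1 h2
    exact Nat.findGreatest_is_greatest h1 h2
  have hls_prop : ∀ n, Γ.isStall x (ls n) ∨ ls n = 0 := by
    intro n
    by_cases h : ls n = 0
    · exact Or.inr h
    · left
      have h2 : ¬ ∀ m, 0 < m → m ≤ n → ¬ Γ.isStall x m := by
        intro hcon
        exact h (Nat.findGreatest_eq_zero_iff.mpr hcon)
      push_neg at h2
      obtain ⟨m, _, hm2, hm3⟩ := h2
      exact Nat.findGreatest_spec hm2 hm3
  have hterm : ∀ n ∈ Finset.range N, Γ.tt x n ≤ Γ.tt x (ls n) * (1/4) ^ (n - ls n) := by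
    intro n _
    have h1 := Γ.decay hΓ x (n - ls n) (ls n) (fun m hm1 hm2 =>
      hls_no n m hm1 (by omega))
    rwa [show ls n + (n - ls n) = n by have := hls_le n; omega] at h1
  set e1 : ℕ → ℕ × ℕ := fun n => (ls n, n - ls n) with he1
  set g1 : ℕ × ℕ → ℝ := fun p => Γ.tt x p.1 * ((1:ℝ)/4) ^ p.2 with hg1
  set B1 := ((Finset.range N).filter (fun a => Γ.isStall x a ∨ a = 0)) ×ˢ (Finset.range N)
    with hB1
  have hinj1 : Set.InjOn e1 ↑(Finset.range N) := by
    intro a _ b _ hab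
    rw [he1] at hab
    simp only [Prod.mk.injEq] at hab
    have h1 := hls_le a
    have h2 := hls_le b
    omega
  have hsum : ∑ n ∈ Finset.range N, Γ.tt x n ≤
      (∑ a ∈ (Finset.range N).filter (fun a => Γ.isStall x a ∨ a = 0), Γ.tt x a) *
        (∑ j ∈ Finset.range N, ((1:ℝ)/4) ^ j) := by
    calc ∑ n ∈ Finset.range N, Γ.tt x n ≤ ∑ n ∈ Finset.range N, g1 (e1 n) :=
        Finset.sum_le_sum hterm
    _ = ∑ p ∈ (Finset.range N).image e1, g1 p := (Finset.sum_image fun a ha b hb hab =>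
        hinj1 ha hb hab).symm
    _ ≤ ∑ p ∈ B1, g1 p := by
        apply Finset.sum_le_sum_of_subset_of_nonneg
        · intro p hp
          rw [Finset.mem_image] at hp
          obtain ⟨n, hn, rfl⟩ := hp
          rw [Finset.mem_range] at hn
          rw [he1]
          dsimp only
          rw [hB1, Finset.mem_product, Finset.mem_filter, Finset.mem_range, Finset.mem_range]
          refine ⟨⟨?_, ?_⟩, ?_⟩
          · have := hls_le n; omega
          · rcases hls_prop n with h | h
            · exact Or.inl h
            · exact Or.inr h
          · omega
        · intro p _ _
          rw [hg1]
          have := Γ.tt_pos hΓ x p.1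
          positivity
    _ = _ := by
        rw [hB1, Finset.sum_product, Finset.sum_mul]
        apply Finset.sum_congr rfl
        intro b _
        simp only [hg1, Finset.mul_sum]
  have hstallsum : ∑ a ∈ (Finset.range N).filter (fun a => Γ.isStall x a ∨ a = 0), Γ.tt x a ≤
      Γ.R₀ + 4 * U := by
    have hsub : (Finset.range N).filter (fun a => Γ.isStall x a ∨ a = 0) ⊆
        insert 0 ((Finset.range N).filter (Γ.isStall x)) := by
      intro a ha
      rw [Finset.mem_filter] at ha
      rcases ha.2 with h | h
      · exact Finset.mem_insert_of_mem (Finset.mem_filter.mpr ⟨ha.1, h⟩)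
      · rw [h]; exact Finset.mem_insert_self _ _
    have h0notin : (0:ℕ) ∉ (Finset.range N).filter (Γ.isStall x) := by
      rw [Finset.mem_filter]
      rintro ⟨-, h0, -⟩
      omega
    calc ∑ a ∈ (Finset.range N).filter (fun a => Γ.isStall x a ∨ a = 0), Γ.tt x a ≤
        ∑ a ∈ insert 0 ((Finset.range N).filter (Γ.isStall x)), Γ.tt x a := by
          apply Finset.sum_le_sum_of_subset_of_nonneg hsub
          intro a _ _
          exact (Γ.tt_pos hΓ x a).le
    _ = Γ.tt x 0 + ∑ a ∈ (Finset.range N).filter (Γ.isStall x), Γ.tt x a :=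
        Finset.sum_insert h0notin
    _ ≤ Γ.R₀ + 4 * U := by
        rw [Γ.tt_zero hΓ x]
        have := Γ.stall_sum hΓ x N
        linarith
  have hgeom : ∑ j ∈ Finset.range N, ((1:ℝ)/4) ^ j ≤ 4/3 := by
    calc ∑ j ∈ Finset.range N, ((1:ℝ)/4) ^ j ≤ 1 / (1 - 1/4) :=
        geom_le (by norm_num) (by norm_num) N
    _ = 4/3 := by norm_num
  have hnn1 : (0:ℝ) ≤ ∑ a ∈ (Finset.range N).filter (fun a => Γ.isStall x a ∨ a = 0),
      Γ.tt x a := Finset.sum_nonneg fun a _ => (Γ.tt_pos hΓ x a).le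
  calc ∑ n ∈ Finset.range N, Γ.tt x n ≤ _ := hsum
  _ ≤ (Γ.R₀ + 4 * U) * (4/3) := by
      apply mul_le_mul hstallsum hgeom ?_ ?_
      · apply Finset.sum_nonneg
        intro j _
        positivity
      · linarith
  _ ≤ 2 * Γ.R₀ + 6 * U := by nlinarith

end chain

section assembly

lemma eDiam_edist (A : Set T) : eDiam (edist : T → T → ℝ≥0∞) A = EMetric.diam A := rfl

lemma eDiam_le_ofReal {A : Set T} {r : ℝ}
    (h : ∀ y ∈ A, ∀ z ∈ A, dist y z ≤ r) :
    eDiam (edist : T → T → ℝ≥0∞) A ≤ ENNReal.ofReal r := by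
  refine iSup₂_le fun y hy => iSup₂_le fun z hz => ?_
  rw [edist_dist]
  exact ENNReal.ofReal_le_ofReal (h y hy z hz)

/-- the admissible sequence constructed from the greedy partitions -/
def adm (hΓ : Good Γ) : Admissible (Set.univ : Set T) where
  piece := fun n x => Γ.pieceF x (n - 1)
  self_mem := fun n x _ => Γ.mem_pieceF x (n - 1)
  subset_base := fun n x _ => Set.subset_univ _
  partition := fun n x _ y _ hy => by
    show (Γ.state y (n - 1)).1 = (Γ.state x (n - 1)).1
    rw [Γ.state_eq_of_mem x (n - 1) hy]
  finite_pieces := fun n => by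
    apply Set.Finite.subset ((Γ.Svals_finite_card (n - 1)).1.image Prod.fst)
    rintro A ⟨x, -, rfl⟩
    exact ⟨Γ.state x (n - 1), ⟨x, rfl⟩, rfl⟩
  card_pieces := fun n => by
    show {A : Set T | ∃ x ∈ Set.univ, Γ.pieceF x (n - 1) = A}.ncard < 2 ^ 2 ^ n
    have hsub : {A : Set T | ∃ x ∈ Set.univ, Γ.pieceF x (n - 1) = A} ⊆
        Prod.fst '' Γ.Svals (n - 1) := by
      rintro A ⟨x, -, rfl⟩
      exact ⟨Γ.state x (n - 1), ⟨x, rfl⟩, rfl⟩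
    have hfin := (Γ.Svals_finite_card (n - 1)).1
    have h1 : {A : Set T | ∃ x ∈ Set.univ, Γ.pieceF x (n - 1) = A}.ncard ≤
        (Prod.fst '' Γ.Svals (n - 1)).ncard :=
      Set.ncard_le_ncard hsub (hfin.image _)
    have h2 : (Prod.fst '' Γ.Svals (n - 1)).ncard ≤ (Γ.Svals (n - 1)).ncard :=
      Set.ncard_image_le hfin
    have h3 := (Γ.Svals_finite_card (n - 1)).2
    have h4 : 2 ^ (2 ^ ((n - 1) + 1) - 2) < 2 ^ 2 ^ n := by
      cases n with
      | zero => norm_num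
      | succ m =>
        simp only [Nat.succ_sub_one]
        apply Nat.pow_lt_pow_right (by norm_num)
        have h5 : (2:ℕ) ≤ 2 ^ (m + 1) := by
          calc (2:ℕ) = 2 ^ 1 := rfl
          _ ≤ 2 ^ (m + 1) := Nat.pow_le_pow_right (by norm_num) (by omega)
        omega
    omega
  nested := fun n x _ => Γ.piece_antitone x (show n - 1 ≤ (n + 1) - 1 by omega)

/-- bound on the chaining functional from the construction -/
lemma gamma_le_bound (hΓ : Good Γ) :
    gammaF (edist : T → T → ℝ≥0∞) 2 1 Set.univ ≤
      ENNReal.ofReal (Γ.R₀ + Real.sqrt 2 *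
        (2 * Γ.R₀ + 6 * (Γ.c / Γ.L * (3 * Γ.F 0 Set.univ + 2 * Γ.ε)))) := by
  set U := Γ.c / Γ.L * (3 * Γ.F 0 Set.univ + 2 * Γ.ε) with hU
  have hUnn : 0 ≤ U := by
    have h1 := hΓ.hF0 0 (Set.univ : Set T)
    have h2 := hΓ.hε
    have h3 := hΓ.hL
    have h4 := Γ.hcpos hΓ
    positivity
  have hR := hΓ.hR₀
  refine le_trans (iInf_le _ (Γ.adm hΓ)) ?_
  rw [show ((1:ℝ))⁻¹ = 1 from inv_one, ENNReal.rpow_one]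
  refine iSup₂_le fun x _ => ?_
  have hterm : ∀ n : ℕ,
      ((2 : ℝ≥0∞) ^ ((n : ℝ) / 2) * eDiam (edist : T → T → ℝ≥0∞)
        ((Γ.adm hΓ).piece n x)) ^ (1:ℝ) ≤
      ENNReal.ofReal (Real.sqrt 2 ^ n * Γ.s (Γ.lvl x (n - 1))) := by
    intro n
    rw [ENNReal.rpow_one]
    have h1 : (2 : ℝ≥0∞) ^ ((n : ℝ) / 2) = ENNReal.ofReal (Real.sqrt 2 ^ n) := by
      rw [show (2 : ℝ≥0∞) = ENNReal.ofReal 2 by norm_num,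
        ENNReal.ofReal_rpow_of_pos (by norm_num), two_rpow_half]
    have h2 : eDiam (edist : T → T → ℝ≥0∞) ((Γ.adm hΓ).piece n x) ≤
        ENNReal.ofReal (Γ.s (Γ.lvl x (n - 1))) := by
      apply eDiam_le_ofReal
      exact Γ.diam_piece hΓ x (n - 1)
    calc (2 : ℝ≥0∞) ^ ((n : ℝ) / 2) * eDiam (edist : T → T → ℝ≥0∞) ((Γ.adm hΓ).piece n x) ≤
        ENNReal.ofReal (Real.sqrt 2 ^ n) * ENNReal.ofReal (Γ.s (Γ.lvl x (n - 1))) := by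
          rw [h1]
          exact mul_le_mul' le_rfl h2
    _ = ENNReal.ofReal (Real.sqrt 2 ^ n * Γ.s (Γ.lvl x (n - 1))) :=
        (ENNReal.ofReal_mul (by positivity)).symm
  apply ENNReal.tsum_le_of_sum_range_le
  intro N
  calc ∑ n ∈ Finset.range N,
      ((2 : ℝ≥0∞) ^ ((n : ℝ) / 2) * eDiam (edist : T → T → ℝ≥0∞)
        ((Γ.adm hΓ).piece n x)) ^ (1:ℝ) ≤
      ∑ n ∈ Finset.range N, ENNReal.ofReal (Real.sqrt 2 ^ n * Γ.s (Γ.lvl x (n - 1))) :=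
        Finset.sum_le_sum fun n _ => hterm n
  _ = ENNReal.ofReal (∑ n ∈ Finset.range N, Real.sqrt 2 ^ n * Γ.s (Γ.lvl x (n - 1))) := by
      rw [ENNReal.ofReal_sum_of_nonneg]
      intro n _
      have := Γ.s_pos hΓ (Γ.lvl x (n - 1))
      positivity
  _ ≤ ENNReal.ofReal (Γ.R₀ + Real.sqrt 2 * (2 * Γ.R₀ + 6 * U)) := by
      apply ENNReal.ofReal_le_ofReal
      cases N with
      | zero =>
        simp only [Finset.range_zero, Finset.sum_empty]
        nlinarith [sq2_pos]
      | succ M =>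
        rw [Finset.sum_range_succ']
        have he0 : Real.sqrt 2 ^ 0 * Γ.s (Γ.lvl x (0 - 1)) = Γ.R₀ := by
          rw [pow_zero, one_mul, show (0:ℕ) - 1 = 0 from rfl, Γ.lvl_zero, Ctx.s, pow_zero,
            div_one]
        have hei : ∀ i, Real.sqrt 2 ^ (i + 1) * Γ.s (Γ.lvl x (i + 1 - 1)) =
            Real.sqrt 2 * Γ.tt x i := by
          intro i
          rw [show i + 1 - 1 = i from rfl, Ctx.tt, pow_succ]
          ring
        rw [he0]
        have hsum2 : ∑ i ∈ Finset.range M, Real.sqrt 2 ^ (i + 1) * Γ.s (Γ.lvl x (i + 1 - 1)) =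
            Real.sqrt 2 * ∑ i ∈ Finset.range M, Γ.tt x i := by
          rw [Finset.mul_sum]
          exact Finset.sum_congr rfl fun i _ => hei i
        rw [hsum2]
        have h6 := Γ.sum_tt_le hΓ x M
        nlinarith [sq2_pos, h6]

end assembly

end Ctx

/-- the trivial admissible sequence -/
def trivAdm (X : Type u) : Admissible (Set.univ : Set X) where
  piece := fun _ _ => Set.univ
  self_mem := fun _ x _ => Set.mem_univ x
  subset_base := fun _ x _ => le_rfl
  partition := fun _ _ _ _ _ _ => rfl
  finite_pieces := fun _ => (Set.finite_singleton Set.univ).subset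
    (by rintro A ⟨x, -, rfl⟩; rfl)
  card_pieces := fun n => by
    show {A : Set X | ∃ x ∈ (Set.univ : Set X), (Set.univ : Set X) = A}.ncard < 2 ^ 2 ^ n
    have h1 : {A : Set X | ∃ x ∈ (Set.univ : Set X), (Set.univ : Set X) = A}.ncard ≤ 1 := by
      have h3 := Set.ncard_le_ncard
        (s := {A : Set X | ∃ x ∈ (Set.univ : Set X), (Set.univ : Set X) = A})
        (t := {(Set.univ : Set X)})
        (by rintro A ⟨x, -, rfl⟩; rfl) (Set.finite_singleton _)
      simpa using h3
    have h2 : (2:ℕ) ≤ 2 ^ 2 ^ n := by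
      calc (2:ℕ) = 2 ^ 1 := rfl
      _ ≤ 2 ^ 2 ^ n := Nat.pow_le_pow_right (by norm_num) Nat.one_le_two_pow
    omega
  nested := fun _ _ _ => le_rfl

lemma gamma_eq_zero_of_eDiam_zero {X : Type u} [MetricSpace X]
    (h : eDiam (edist : X → X → ℝ≥0∞) (Set.univ : Set X) = 0) :
    gammaF (edist : X → X → ℝ≥0∞) 2 1 (Set.univ : Set X) = 0 := by
  apply le_antisymm ?_ zero_le
  refine le_trans (iInf_le _ (trivAdm X)) ?_
  have h1 : ∀ x : X, ∑' n : ℕ, ((2 : ℝ≥0∞) ^ ((n : ℝ) / 2) *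
      eDiam (edist : X → X → ℝ≥0∞) ((trivAdm X).piece n x)) ^ (1:ℝ) = 0 := by
    intro x
    have h2 : ∀ n : ℕ, ((2 : ℝ≥0∞) ^ ((n : ℝ) / 2) *
        eDiam (edist : X → X → ℝ≥0∞) ((trivAdm X).piece n x)) ^ (1:ℝ) = 0 := by
      intro n
      rw [ENNReal.rpow_one, show (trivAdm X).piece n x = Set.univ from rfl, h, mul_zero]
    rw [tsum_congr h2]
    exact tsum_zero
  rw [show ((1:ℝ))⁻¹ = 1 from inv_one, ENNReal.rpow_one]
  refine le_trans (iSup₂_le fun x _ => le_of_eq (h1 x)) (by norm_num)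

end GFT


/-- **Growth functional theorem** (Theorem 6.12). If a decreasing sequence of
increasing functionals `(F_n)` satisfies the growth condition with parameters
`c, L > 0` and `c ≥ c₀`, then `γ₂(T) ≤ C ((c/L)·F₀(T) + diam T)` for universal
constants `c₀, C`. -/
theorem growth_functional_theorem :
    ∃ (c₀ : ℝ) (C : ℝ≥0∞), 0 < c₀ ∧ 0 < C ∧ C ≠ ∞ ∧
      ∀ (T : Type u) [MetricSpace T] (c L : ℝ) (F : ℕ → Set T → ℝ),
        c₀ ≤ c → 0 < L →
        (∀ n H, 0 ≤ F n H) →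
        (∀ (n : ℕ) (H H' : Set T), H ⊆ H' → F n H ≤ F n H') →
        (∀ (n : ℕ) (H : Set T), F (n + 1) H ≤ F n H) →
        (∀ b : ℝ, 0 < b → ∀ n : ℕ, 1 ≤ n →
          ∀ H : Fin (2 ^ 2 ^ n) → Set T, SeparatedFamily b c H →
            L * (2 : ℝ) ^ ((n : ℝ) / 2) * b + ⨅ i, F n (H i) ≤
              F (n - 1) (⋃ i, H i)) →
        gammaF (edist : T → T → ℝ≥0∞) 2 1 Set.univ ≤
          C * (ENNReal.ofReal (c / L * F 0 Set.univ) +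
            eDiam (edist : T → T → ℝ≥0∞) Set.univ) := by
  refine ⟨16, 32, by norm_num, by norm_num, by norm_num, ?_⟩
  intro T _ c L F hc hL hF0 hmono hdec hgrowth
  set Δ := eDiam (edist : T → T → ℝ≥0∞) (Set.univ : Set T) with hΔ
  by_cases htop : Δ = ⊤
  · have h1 : (32:ℝ≥0∞) * (ENNReal.ofReal (c / L * F 0 Set.univ) + ⊤) = ⊤ := by
      simp
    rw [htop, h1]
    exact le_top
  by_cases hzero : Δ = 0
  · rw [GFT.gamma_eq_zero_of_eDiam_zero (by rw [← hΔ]; exact hzero)]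
    exact zero_le
  have hT : Nonempty T := by
    by_contra hne
    rw [not_nonempty_iff] at hne
    apply hzero
    rw [hΔ, eDiam]
    simp
  set R₀ := Δ.toReal with hR₀def
  have hR₀pos : 0 < R₀ := ENNReal.toReal_pos hzero htop
  have hofReal : ENNReal.ofReal R₀ = Δ := ENNReal.ofReal_toReal htop
  have hdistb : ∀ x y : T, dist x y ≤ R₀ := by
    intro x y
    have h1 : edist x y ≤ Δ := by
      rw [hΔ]
      apply le_iSup₂_of_le x (Set.mem_univ x)
      apply le_iSup₂_of_le y (Set.mem_univ y)
      exact le_rfl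
    rw [dist_edist]
    exact ENNReal.toReal_mono htop h1
  have hcpos : (0:ℝ) < c := lt_of_lt_of_le (by norm_num) hc
  apply ENNReal.le_of_forall_pos_le_add
  intro η hη _
  have hηpos : (0:ℝ) < (η : ℝ) := hη
  set ε : ℝ := (η : ℝ) * L / (36 * c) with hεdef
  have hεpos : 0 < ε := by positivity
  set Γ : GFT.Ctx T := ⟨c, L, ε, R₀, F⟩ with hΓdef
  have hGood : GFT.Good Γ := ⟨hc, hL, hεpos, hR₀pos, hdistb, hF0, hmono, hdec, hgrowth⟩
  have hmain := Γ.gamma_le_bound hGood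
  set F0 := F 0 (Set.univ : Set T) with hF0def
  have hF0nn : 0 ≤ F0 := hF0 0 _
  set Q := c / L * F0 with hQdef
  have hQnn : 0 ≤ Q := by positivity
  have hB : Γ.R₀ + Real.sqrt 2 *
      (2 * Γ.R₀ + 6 * (Γ.c / Γ.L * (3 * Γ.F 0 Set.univ + 2 * Γ.ε))) ≤
      4 * R₀ + 27 * Q + (η : ℝ) / 2 := by
    have hsq := GFT.sq2_le_32
    have hsqpos := GFT.sq2_pos
    have hΓc : Γ.c = c := rfl
    have hΓL : Γ.L = L := rfl
    have hΓR : Γ.R₀ = R₀ := rfl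
    have hΓε : Γ.ε = ε := rfl
    have hΓF : Γ.F 0 Set.univ = F0 := rfl
    rw [hΓc, hΓL, hΓR, hΓε, hΓF]
    have hεval : 18 * (c / L * ε) = (η : ℝ) / 2 := by
      rw [hεdef]
      field_simp
      ring
    have hcL : 0 ≤ c / L := by positivity
    nlinarith [mul_pos hcpos hL, mul_nonneg hcL hF0nn, mul_nonneg hcL hεpos.le,
      mul_le_mul_of_nonneg_right hsq (mul_nonneg hcL hF0nn),
      mul_le_mul_of_nonneg_right hsq (mul_nonneg hcL hεpos.le),
      mul_le_mul_of_nonneg_right hsq hR₀pos.le]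
  calc gammaF (edist : T → T → ℝ≥0∞) 2 1 Set.univ ≤
      ENNReal.ofReal (Γ.R₀ + Real.sqrt 2 *
        (2 * Γ.R₀ + 6 * (Γ.c / Γ.L * (3 * Γ.F 0 Set.univ + 2 * Γ.ε)))) := hmain
  _ ≤ ENNReal.ofReal (4 * R₀ + 27 * Q + (η : ℝ) / 2) := ENNReal.ofReal_le_ofReal hB
  _ ≤ ENNReal.ofReal (4 * R₀ + 27 * Q) + ENNReal.ofReal ((η : ℝ) / 2) :=
      ENNReal.ofReal_add_le
  _ ≤ (ENNReal.ofReal (4 * R₀) + ENNReal.ofReal (27 * Q)) + ENNReal.ofReal ((η : ℝ) / 2) :=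
      add_le_add_left ENNReal.ofReal_add_le _
  _ ≤ (4 * Δ + 27 * ENNReal.ofReal Q) + (η : ℝ≥0∞) := by
      apply add_le_add
      · apply add_le_add
        · rw [ENNReal.ofReal_mul (by norm_num : (0:ℝ) ≤ 4), hofReal]
          norm_num
        · rw [ENNReal.ofReal_mul (by norm_num : (0:ℝ) ≤ 27)]
          norm_num
      · calc ENNReal.ofReal ((η : ℝ) / 2) ≤ ENNReal.ofReal (η : ℝ) :=
            ENNReal.ofReal_le_ofReal (by linarith)
        _ = (η : ℝ≥0∞) := ENNReal.ofReal_coe_nnreal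
  _ ≤ 32 * (ENNReal.ofReal Q + Δ) + (η : ℝ≥0∞) := by
      apply add_le_add_left
      rw [mul_add, add_comm (32 * ENNReal.ofReal Q) (32 * Δ)]
      exact add_le_add (mul_le_mul_left (by norm_num) Δ)
        (mul_le_mul_left (by norm_num) _)
  _ = 32 * (ENNReal.ofReal (c / L * F 0 Set.univ) + Δ) + (η : ℝ≥0∞) := rfl
end
end

section
/- (Multiscale interpolation lemma for growth functionals.) Let (T,d) be a metric space, L, a > 0, and let (F_n)_{n≥0} be maps from subsets of T to [0,∞) that are increasing (H ⊆ H' implies F_n(H) ≤ F_n(H')) and decreasing in n (F_{n+1}(H) ≤ F_n(H)). Define K_n(t,x) := inf_{s≥0} { t·s + F₀(T) − F_n(B(x,s)) } where B(x,s) := { z ∈ T : d(x,z) ≤ s }. For each n ≥ 1 and x ∈ T choose s_n^a(x) ≥ 0 such that K_n(L·a·2^{n/2}, x) ≤ L·a·2^{n/2}·s_n^a(x) + F₀(T) − F_n(B(x, s_n^a(x))) ≤ K_n(L·a·2^{n/2}, x) + 2^{−n}·F₀(T). Then there is a universal constant C such that sup_{x∈T} Σ_{n≥1} 2^{n/2}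 s_n^a(x) ≤ C · F₀(T)/(L·a). -/
open scoped ENNReal NNReal
open Set

noncomputable section

universe u

/-- The multiscale interpolation functional
`K_n(t,x) = inf_{s ≥ 0} { t·s + F₀(T) − F_n(B(x,s)) }`. -/
def Kfun {T : Type u} [MetricSpace T] (F : ℕ → Set T → ℝ) (n : ℕ) (t : ℝ) (x : T) : ℝ :=
  sInf {v : ℝ | ∃ s : ℝ, 0 ≤ s ∧
    v = t * s + F 0 Set.univ - F n {z | dist x z ≤ s}}

/-- **Multiscale interpolation lemma for growth functionals** (Lemma 6.13).
If the `s_n^a(x)` are near-minimizers in the definition of `K_n(La2^{n/2},x)`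
(up to additive error `2^{−n} F₀(T)`), then
`sup_{x∈T} Σ_{n≥1} 2^{n/2} s_n^a(x) ≤ C·F₀(T)/(L·a)` for a universal constant `C`. -/
theorem multiscale_interpolation_lemma :
    ∃ C : ℝ, 0 < C ∧
      ∀ (T : Type u) [MetricSpace T] (L a : ℝ) (F : ℕ → Set T → ℝ) (sa : ℕ → T → ℝ),
        0 < L → 0 < a →
        (∀ n H, 0 ≤ F n H) →
        (∀ (n : ℕ) (H H' : Set T), H ⊆ H' → F n H ≤ F n H') →
        (∀ (n : ℕ) (H : Set T), F (n + 1) H ≤ F n H) →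
        (∀ n : ℕ, 1 ≤ n → ∀ x : T, 0 ≤ sa n x ∧
          Kfun F n (L * a * (2 : ℝ) ^ ((n : ℝ) / 2)) x ≤
            L * a * (2 : ℝ) ^ ((n : ℝ) / 2) * sa n x + F 0 Set.univ -
              F n {z | dist x z ≤ sa n x} ∧
          L * a * (2 : ℝ) ^ ((n : ℝ) / 2) * sa n x + F 0 Set.univ -
              F n {z | dist x z ≤ sa n x} ≤
            Kfun F n (L * a * (2 : ℝ) ^ ((n : ℝ) / 2)) x +
              ((2 : ℝ) ^ n)⁻¹ * F 0 Set.univ) →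
        ∀ x : T,
          ∑' n : ℕ, ENNReal.ofReal
              ((2 : ℝ) ^ (((n : ℝ) + 1) / 2) * sa (n + 1) x) ≤
            ENNReal.ofReal (C * F 0 Set.univ / (L * a)) := by
  refine ⟨16, by norm_num, ?_⟩
  intro T _ L a F sa hL ha hFnn hmono hdec hsa x
  have hLa : 0 < L * a := mul_pos hL ha
  have hF0 : 0 ≤ F 0 Set.univ := hFnn 0 _
  -- F n ≤ F 0
  have hFle0 : ∀ (n : ℕ) (H : Set T), F n H ≤ F 0 H := by
    intro n
    induction n with
    | zero => exact fun H => le_rfl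
    | succ n ih => exact fun H => (hdec n H).trans (ih H)
  have hball : ∀ (n : ℕ) (s : ℝ), F n {z | dist x z ≤ s} ≤ F 0 Set.univ := fun n s =>
    (hmono n _ Set.univ (Set.subset_univ _)).trans (hFle0 n _)
  -- basic Kfun facts
  have hKbdd : ∀ (n : ℕ) (t : ℝ), 0 ≤ t →
      BddBelow {v : ℝ | ∃ s : ℝ, 0 ≤ s ∧
        v = t * s + F 0 Set.univ - F n {z | dist x z ≤ s}} := by
    intro n t ht
    refine ⟨0, ?_⟩
    rintro v ⟨s, hs, rfl⟩
    have h1 := hball n s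
    nlinarith [mul_nonneg ht hs]
  have hKle : ∀ (n : ℕ) (t s : ℝ), 0 ≤ t → 0 ≤ s →
      Kfun F n t x ≤ t * s + F 0 Set.univ - F n {z | dist x z ≤ s} := by
    intro n t s ht hs
    exact csInf_le (hKbdd n t ht) ⟨s, hs, rfl⟩
  have hKleF0 : ∀ (n : ℕ) (t : ℝ), 0 ≤ t → Kfun F n t x ≤ F 0 Set.univ := by
    intro n t ht
    have h1 := hKle n t 0 ht le_rfl
    have h2 := hFnn n {z | dist x z ≤ (0:ℝ)}
    nlinarith
  -- abbreviations
  set u : ℕ → ℝ := fun k => L * a * (2 : ℝ) ^ (((k + 1 : ℕ) : ℝ) / 2) * sa (k + 1) x with hu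
  set θ : ℕ → ℝ := fun k => F 0 Set.univ - F (k + 1) {z | dist x z ≤ sa (k + 1) x} with hθ
  set r : ℝ := (2 : ℝ) ^ (-(1 : ℝ) / 2) with hr
  have hrpos : 0 < r := Real.rpow_pos_of_pos two_pos _
  have hrsq : r * r = 1 / 2 := by
    rw [hr, ← Real.rpow_add two_pos]
    norm_num
  have hrle : r ≤ 3 / 4 := by nlinarith
  have htpos : ∀ n : ℕ, (0:ℝ) < (2 : ℝ) ^ ((n : ℝ) / 2) := fun n =>
    Real.rpow_pos_of_pos two_pos _
  have hsnn : ∀ k : ℕ, 0 ≤ sa (k + 1) x := fun k =>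
    (hsa (k + 1) (Nat.succ_le_succ (Nat.zero_le k)) x).1
  have hunn : ∀ k : ℕ, 0 ≤ u k := by
    intro k
    exact mul_nonneg (mul_nonneg hLa.le (htpos _).le) (hsnn k)
  have hθnn : ∀ k : ℕ, 0 ≤ θ k := by
    intro k
    have := hball (k + 1) (sa (k + 1) x)
    simp only [hθ]
    linarith
  have hθle : ∀ k : ℕ, θ k ≤ F 0 Set.univ := by
    intro k
    have := hFnn (k + 1) {z | dist x z ≤ sa (k + 1) x}
    simp only [hθ]
    linarith
  -- crude bound u k ≤ 2 F₀
  have hub : ∀ k : ℕ, u k ≤ 2 * F 0 Set.univ := by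
    intro k
    obtain ⟨h0, hlo, hhi⟩ := hsa (k + 1) (Nat.succ_le_succ (Nat.zero_le k)) x
    have hK := hKleF0 (k + 1) (L * a * (2 : ℝ) ^ (((k + 1 : ℕ) : ℝ) / 2))
      (mul_nonneg hLa.le (htpos _).le)
    have hb := hball (k + 1) (sa (k + 1) x)
    have hpow : ((2 : ℝ) ^ (k + 1))⁻¹ ≤ 1 := by
      have h2k : (1:ℝ) ≤ 2 ^ (k+1) := by
        calc (1:ℝ) = 1 ^ (k+1) := (one_pow _).symm
          _ ≤ 2 ^ (k+1) := pow_le_pow_left₀ (by norm_num) (by norm_num) _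
      rw [inv_le_one_iff₀]; right; exact h2k
    simp only [hu]
    nlinarith
  -- the key recursive inequality
  have hkey : ∀ k : ℕ, u k + θ k ≤ r * u (k + 1) + θ (k + 1) +
      ((2 : ℝ) ^ (k + 1))⁻¹ * F 0 Set.univ := by
    intro k
    obtain ⟨h0, hlo, hhi⟩ := hsa (k + 1) (Nat.succ_le_succ (Nat.zero_le k)) x
    have hK : Kfun F (k + 1) (L * a * (2 : ℝ) ^ (((k + 1 : ℕ) : ℝ) / 2)) x ≤
        L * a * (2 : ℝ) ^ (((k + 1 : ℕ) : ℝ) / 2) * sa (k + 2) x + F 0 Set.univ -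
          F (k + 1) {z | dist x z ≤ sa (k + 2) x} :=
      hKle (k + 1) _ (sa (k + 2) x) (mul_nonneg hLa.le (htpos _).le) (hsnn (k + 1))
    have hd : F (k + 2) {z | dist x z ≤ sa (k + 2) x} ≤
        F (k + 1) {z | dist x z ≤ sa (k + 2) x} := hdec (k + 1) _
    have hexp : (2 : ℝ) ^ (((k + 1 : ℕ) : ℝ) / 2) = r * (2 : ℝ) ^ (((k + 2 : ℕ) : ℝ) / 2) := by
      rw [hr, ← Real.rpow_add two_pos]
      push_cast
      ring_nf
    have hru : L * a * (2 : ℝ) ^ (((k + 1 : ℕ) : ℝ) / 2) * sa (k + 2) x =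
        r * (L * a * (2 : ℝ) ^ (((k + 2 : ℕ) : ℝ) / 2) * sa (k + 2) x) := by
      rw [hexp]; ring
    simp only [hu, hθ]
    have hnn : ((k + 1) + 1 : ℕ) = (k + 2 : ℕ) := rfl
    rw [hnn]
    linarith [hru, hK, hd, hhi]
  -- finite-sum bound
  have hS : ∀ N : ℕ, ∑ k ∈ Finset.range N, u k ≤ 16 * F 0 Set.univ := by
    intro N
    have step : ∀ k ∈ Finset.range N, u k - r * u (k + 1) ≤
        (θ (k + 1) - θ k) + ((2:ℝ)^(k+1))⁻¹ * F 0 Set.univ := by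
      intro k _
      have := hkey k
      linarith
    have hsum1 : ∑ k ∈ Finset.range N, (u k - r * u (k + 1)) ≤
        ∑ k ∈ Finset.range N, ((θ (k + 1) - θ k) + ((2:ℝ)^(k+1))⁻¹ * F 0 Set.univ) :=
      Finset.sum_le_sum step
    have htel : ∑ k ∈ Finset.range N, (θ (k + 1) - θ k) = θ N - θ 0 :=
      Finset.sum_range_sub θ N
    have hgeo : ∑ k ∈ Finset.range N, ((2:ℝ)^(k+1))⁻¹ ≤ 1 := by
      have heq : ∀ k : ℕ, ((2:ℝ)^(k+1))⁻¹ = (1/2) * (1/2 : ℝ)^k := by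
        intro k
        rw [pow_succ]
        rw [one_div_pow]; field_simp
      calc ∑ k ∈ Finset.range N, ((2:ℝ)^(k+1))⁻¹
          = (1/2) * ∑ k ∈ Finset.range N, (1/2 : ℝ)^k := by
            rw [Finset.mul_sum]; exact Finset.sum_congr rfl fun k _ => heq k
        _ ≤ (1/2) * 2 := by
            have := sum_geometric_two_le N
            linarith
        _ = 1 := by norm_num
    have hsum2 : ∑ k ∈ Finset.range N, ((θ (k + 1) - θ k) + ((2:ℝ)^(k+1))⁻¹ * F 0 Set.univ)
        = (θ N - θ 0) + (∑ k ∈ Finset.range N, ((2:ℝ)^(k+1))⁻¹) * F 0 Set.univ := by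
      rw [Finset.sum_add_distrib, htel, Finset.sum_mul]
    have hrhs : (θ N - θ 0) + (∑ k ∈ Finset.range N, ((2:ℝ)^(k+1))⁻¹) * F 0 Set.univ
        ≤ 2 * F 0 Set.univ := by
      have h3 : (∑ k ∈ Finset.range N, ((2:ℝ)^(k+1))⁻¹) * F 0 Set.univ ≤ F 0 Set.univ :=
        mul_le_of_le_one_left hF0 hgeo
      have h4 : θ N - θ 0 ≤ F 0 Set.univ := by linarith [hθle N, hθnn 0]
      calc (θ N - θ 0) + (∑ k ∈ Finset.range N, ((2:ℝ)^(k+1))⁻¹) * F 0 Set.univ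
          ≤ F 0 Set.univ + F 0 Set.univ := add_le_add h4 h3
        _ = 2 * F 0 Set.univ := by ring
    -- Abel summation
    have hshift : ∑ k ∈ Finset.range N, u (k + 1)
        = (∑ k ∈ Finset.range N, u k) + u N - u 0 := by
      have h1 : ∑ k ∈ Finset.range (N + 1), u k
          = (∑ k ∈ Finset.range N, u (k + 1)) + u 0 := Finset.sum_range_succ' u N
      have h2 : ∑ k ∈ Finset.range (N + 1), u k
          = (∑ k ∈ Finset.range N, u k) + u N := Finset.sum_range_succ u N
      linarith
    have hsplit : ∑ k ∈ Finset.range N, (u k - r * u (k + 1))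
        = (1 - r) * (∑ k ∈ Finset.range N, u k) - r * u N + r * u 0 := by
      rw [Finset.sum_sub_distrib, ← Finset.mul_sum, hshift]
      ring
    have hfinal : (1 - r) * (∑ k ∈ Finset.range N, u k) ≤ 4 * F 0 Set.univ := by
      have h1 : ∑ k ∈ Finset.range N, (u k - r * u (k + 1)) ≤ 2 * F 0 Set.univ := by
        calc _ ≤ _ := hsum1
          _ = _ := hsum2
          _ ≤ _ := hrhs
      have h2 := hub N
      have h3 := hunn 0
      nlinarith [hsplit]
    nlinarith [hfinal, hF0]
  -- convert to the goal
  have hgoal : ∀ N : ℕ, ∑ k ∈ Finset.range N,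
      ((2 : ℝ) ^ (((k : ℝ) + 1) / 2) * sa (k + 1) x) ≤ 16 * F 0 Set.univ / (L * a) := by
    intro N
    have heq : ∀ k : ℕ, (2 : ℝ) ^ (((k : ℝ) + 1) / 2) * sa (k + 1) x = u k / (L * a) := by
      intro k
      simp only [hu]
      push_cast
      field_simp
    calc ∑ k ∈ Finset.range N, ((2 : ℝ) ^ (((k : ℝ) + 1) / 2) * sa (k + 1) x)
        = (∑ k ∈ Finset.range N, u k) / (L * a) := by
          rw [Finset.sum_div]; exact Finset.sum_congr rfl fun k _ => heq k
      _ ≤ 16 * F 0 Set.univ / (L * a) := by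
          exact div_le_div_of_nonneg_right (hS N) hLa.le
  rw [ENNReal.tsum_eq_iSup_nat]
  refine iSup_le fun N => ?_
  have hnn : ∀ k ∈ Finset.range N, 0 ≤ (2 : ℝ) ^ (((k : ℝ) + 1) / 2) * sa (k + 1) x :=
    fun k _ => mul_nonneg (Real.rpow_pos_of_pos two_pos _).le (hsnn k)
  rw [← ENNReal.ofReal_sum_of_nonneg hnn]
  exact ENNReal.ofReal_le_ofReal (hgoal N)
end
end
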